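/- arXiv:0705.4353 — 4 statements merged into one kernel-verified Lean document; each statement's English description precedes it below -/
import Mathlib

section
/- Every finite CMV matrix C = C(α₀,…,α_{n-2};β) of order n has a simple spectrum lying on the unit circle: its characteristic polynomial Φ̃_n(z) = det(zI − C) factors as Φ̃_n(z) = ∏_{j=1}^n (z − ζ_j) with ζ₁,…,ζ_n pairwise distinct points of 𝕋. -/
open Complex Polynomial Matrix BigOperators Finset

noncomputable section

namespace CMVPaper

/-- `ρ(α) = √(1 − |α|²)`. -/
def rhoC (a : ℂ) : ℝ := Real.sqrt (1 - ‖a‖ ^ 2)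

/-- The factor `L = Θ(α₀) ⊕ Θ(α₂) ⊕ …` of the CMV matrix, with a final `1×1` block
equal to `conj β` appended when `n` is odd. -/
def cmvL (n : ℕ) (α : ℕ → ℂ) (β : ℂ) : Matrix (Fin n) (Fin n) ℂ :=
  Matrix.of fun i j =>
    if Even (i : ℕ) then
      if (i : ℕ) = n - 1 then (if j = i then (starRingEnd ℂ) β else 0)
      else if j = i then (starRingEnd ℂ) (α (i : ℕ))
      else if (j : ℕ) = (i : ℕ) + 1 then ((rhoC (α (i : ℕ)) : ℝ) : ℂ)
      else 0
    else
      if (j : ℕ) + 1 = (i : ℕ) then ((rhoC (α ((i : ℕ) - 1)) : ℝ) : ℂ)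
      else if j = i then -α ((i : ℕ) - 1)
      else 0

/-- The factor `M = (1) ⊕ Θ(α₁) ⊕ Θ(α₃) ⊕ …` of the CMV matrix, with a final `1×1` block
equal to `conj β` appended when `n` is even. -/
def cmvM (n : ℕ) (α : ℕ → ℂ) (β : ℂ) : Matrix (Fin n) (Fin n) ℂ :=
  Matrix.of fun i j =>
    if (i : ℕ) = 0 then (if j = i then 1 else 0)
    else if Odd (i : ℕ) then
      if (i : ℕ) = n - 1 then (if j = i then (starRingEnd ℂ) β else 0)
      else if j = i then (starRingEnd ℂ) (α (i : ℕ))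
      else if (j : ℕ) = (i : ℕ) + 1 then ((rhoC (α (i : ℕ)) : ℝ) : ℂ)
      else 0
    else
      if (j : ℕ) + 1 = (i : ℕ) then ((rhoC (α ((i : ℕ) - 1)) : ℝ) : ℂ)
      else if j = i then -α ((i : ℕ) - 1)
      else 0

/-- The finite CMV matrix `C(α₀,…,α_{n-2};β) = L·M` of order `n`. -/
def CMVmat (n : ℕ) (α : ℕ → ℂ) (β : ℂ) : Matrix (Fin n) (Fin n) ℂ :=
  cmvL n α β * cmvM n α β

/-- Extension of a finite tuple of Verblunsky coefficients to a function on `ℕ`. -/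
def extFun {m : ℕ} (α : Fin m → ℂ) : ℕ → ℂ := fun k => if h : k < m then α ⟨k, h⟩ else 0

/-- The leading principal `k×k` submatrix of an `n×n` matrix (entries out of range set to `0`;
for `k ≤ n` this is the usual leading principal submatrix). -/
def leadPrincipal {n : ℕ} (M : Matrix (Fin n) (Fin n) ℂ) (k : ℕ) : Matrix (Fin k) (Fin k) ℂ :=
  Matrix.of fun i j =>
    if hi : (i : ℕ) < n then if hj : (j : ℕ) < n then M ⟨i, hi⟩ ⟨j, hj⟩ else 0 else 0

/-- The Szegő polynomial `Φ_k(z) = det (z·I_k − C^{(k)})`, the characteristic polynomial of the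
leading principal `k×k` submatrix of the CMV matrix `C(α;β)` of order `n`. -/
def PhiPoly (n : ℕ) (α : ℕ → ℂ) (β : ℂ) (k : ℕ) : Polynomial ℂ :=
  Matrix.charpoly (leadPrincipal (CMVmat n α β) k)

/-- The `*`-transform of a polynomial of degree (at most) `k`:
`P*(z) = z^k · conj (P (1/conj z))`, i.e. coefficientwise `(P*)_j = conj (P_{k-j})`. -/
def starPoly (k : ℕ) (p : Polynomial ℂ) : Polynomial ℂ :=
  Polynomial.reflect k (p.map (starRingEnd ℂ))

/-- The standard inner product `⟨u, v⟩ = ∑ u_i conj (v_i)` on `ℂⁿ`. -/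
def innerC {n : ℕ} (u v : Fin n → ℂ) : ℂ := ∑ i, u i * (starRingEnd ℂ) (v i)

/-- The last standard basis vector `e_n` of `ℂⁿ`. -/
def lastVec (n : ℕ) : Fin n → ℂ := fun i => if (i : ℕ) = n - 1 then 1 else 0

/-- The Weyl function `w(z) = ⟨(zI − C)⁻¹ e_n, e_n⟩`. -/
def weylFn {n : ℕ} (M : Matrix (Fin n) (Fin n) ℂ) (z : ℂ) : ℂ :=
  innerC ((z • (1 : Matrix (Fin n) (Fin n) ℂ) - M)⁻¹ *ᵥ lastVec n) (lastVec n)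

/-- The spectrum of a matrix, as the zero set of its characteristic polynomial. -/
def specSet {n : ℕ} (M : Matrix (Fin n) (Fin n) ℂ) : Set ℂ :=
  {z : ℂ | (Matrix.charpoly M).eval z = 0}

/-- Two `m`-point subsets of the unit circle interlace: labeling each as
`{e^{i x_{j,l}}}` with `0 ≤ x_{1,l} < … < x_{m,l} < 2π`, possibly after swapping the
two sets, `x_{1,1} < x_{1,2} < x_{2,1} < x_{2,2} < … < x_{m,1} < x_{m,2}`. -/
def InterlaceOnT (m : ℕ) (Z₁ Z₂ : Set ℂ) : Prop :=
  ∃ x₁ x₂ : Fin m → ℝ,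
    (∀ j, 0 ≤ x₁ j ∧ x₁ j < 2 * Real.pi) ∧
    (∀ j, 0 ≤ x₂ j ∧ x₂ j < 2 * Real.pi) ∧
    StrictMono x₁ ∧ StrictMono x₂ ∧
    Z₁ = Set.range (fun j => Complex.exp (Complex.I * (x₁ j : ℂ))) ∧
    Z₂ = Set.range (fun j => Complex.exp (Complex.I * (x₂ j : ℂ))) ∧
    ((∀ j : Fin m, x₁ j < x₂ j ∧ ∀ h : (j : ℕ) + 1 < m, x₂ j < x₁ ⟨(j : ℕ) + 1, h⟩) ∨
     (∀ j : Fin m, x₂ j < x₁ j ∧ ∀ h : (j : ℕ) + 1 < m, x₁ j < x₂ ⟨(j : ℕ) + 1, h⟩))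


section Helpers

variable {n : ℕ} {α : ℕ → ℂ} {β : ℂ}

lemma rhoC_sq {a : ℂ} (ha : ‖a‖ < 1) : (rhoC a : ℝ) ^ 2 = 1 - ‖a‖ ^ 2 := by
  have h0 : (0:ℝ) ≤ 1 - ‖a‖ ^ 2 := by nlinarith [norm_nonneg a]
  exact Real.sq_sqrt h0

lemma rhoC_pos {a : ℂ} (ha : ‖a‖ < 1) : 0 < rhoC a := by
  apply Real.sqrt_pos.mpr
  nlinarith [norm_nonneg a]

lemma sum_ite_single {a : Fin n} (c : ℂ) (g : Fin n → ℂ) :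
    ∑ k, (if k = a then c else 0) * g k = c * g a := by
  rw [Finset.sum_eq_single a]
  · simp
  · intro k _ hk; simp [hk]
  · intro h; exact absurd (Finset.mem_univ a) h

lemma sum_ite_pair {a b : Fin n} (hab : a ≠ b) (c d : ℂ) (g : Fin n → ℂ) :
    ∑ k, (if k = a then c else if k = b then d else 0) * g k = c * g a + d * g b := by
  have key : ∀ k, (if k = a then c else if k = b then d else 0) * g k
      = (if k = a then c * g a else 0) + (if k = b then d * g b else 0) := by
    intro k
    by_cases h1 : k = a
    · subst h1
      rw [if_pos rfl, if_pos rfl, if_neg (by simpa using hab), add_zero]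
    · rw [if_neg h1, if_neg h1, zero_add]
      by_cases h2 : k = b
      · subst h2; simp
      · simp [h2]
  rw [Finset.sum_congr rfl fun k _ => key k, Finset.sum_add_distrib]
  simp [Finset.sum_ite_eq']

end Helpers

section Rows

variable {n : ℕ} (α : ℕ → ℂ) (β : ℂ)

lemma L_row_even_last {i : Fin n} (h2 : Even (i:ℕ)) (h3 : (i:ℕ) = n-1) (g : Fin n → ℂ) :
    ∑ k, cmvL n α β i k * g k = (starRingEnd ℂ) β * g i := by
  have : ∀ k, cmvL n α β i k = if k = i then (starRingEnd ℂ) β else 0 := by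
    intro k
    simp only [cmvL, Matrix.of_apply]
    rw [if_pos h2, if_pos h3]
  rw [Finset.sum_congr rfl fun k _ => by rw [this k]]
  exact sum_ite_single _ _

lemma L_row_even {i : Fin n} (h2 : Even (i:ℕ)) (h3 : (i:ℕ) ≠ n-1) (h4 : (i:ℕ)+1 < n)
    (g : Fin n → ℂ) :
    ∑ k, cmvL n α β i k * g k
      = (starRingEnd ℂ) (α i) * g i + (rhoC (α i) : ℂ) * g ⟨(i:ℕ)+1, h4⟩ := by
  have : ∀ k, cmvL n α β i k
      = if k = i then (starRingEnd ℂ) (α i) else if k = ⟨(i:ℕ)+1, h4⟩ then (rhoC (α i) : ℂ) else 0 := by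
    intro k
    simp only [cmvL, Matrix.of_apply]
    rw [if_pos h2, if_neg h3]
    refine if_congr Iff.rfl rfl (if_congr ?_ rfl rfl)
    simp [Fin.ext_iff]
  rw [Finset.sum_congr rfl fun k _ => by rw [this k]]
  exact sum_ite_pair (ne_of_apply_ne Fin.val (by show (i:ℕ) ≠ (i:ℕ)+1; omega)) _ _ _

lemma L_row_odd {i : Fin n} (h2 : ¬ Even (i:ℕ)) (h5 : (i:ℕ) - 1 < n)
    (g : Fin n → ℂ) :
    ∑ k, cmvL n α β i k * g k
      = (rhoC (α ((i:ℕ)-1)) : ℂ) * g ⟨(i:ℕ)-1, h5⟩ + (-α ((i:ℕ)-1)) * g i := by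
  have h1 : 1 ≤ (i:ℕ) := by
    rcases Nat.eq_zero_or_pos (i:ℕ) with h | h
    · exact absurd (h ▸ Even.zero) h2
    · exact h
  have : ∀ k, cmvL n α β i k
      = if k = ⟨(i:ℕ)-1, h5⟩ then (rhoC (α ((i:ℕ)-1)) : ℂ) else if k = i then (-α ((i:ℕ)-1)) else 0 := by
    intro k
    simp only [cmvL, Matrix.of_apply, if_neg h2]
    refine if_congr ?_ rfl rfl
    simp only [Fin.ext_iff]
    show ((k:ℕ) + 1 = (i:ℕ)) ↔ ((k:ℕ) = (i:ℕ) - 1)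
    omega
  rw [Finset.sum_congr rfl fun k _ => by rw [this k]]
  exact sum_ite_pair (ne_of_apply_ne Fin.val (by show (i:ℕ)-1 ≠ (i:ℕ); omega)) _ _ _

lemma M_row_zero {i : Fin n} (h0 : (i:ℕ) = 0) (g : Fin n → ℂ) :
    ∑ k, cmvM n α β i k * g k = g i := by
  have : ∀ k, cmvM n α β i k = if k = i then 1 else 0 := by
    intro k; simp [cmvM, h0]
  rw [Finset.sum_congr rfl fun k _ => by rw [this k]]
  rw [sum_ite_single, one_mul]

lemma M_row_odd_last {i : Fin n} (h2 : Odd (i:ℕ)) (h3 : (i:ℕ) = n-1) (g : Fin n → ℂ) :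
    ∑ k, cmvM n α β i k * g k = (starRingEnd ℂ) β * g i := by
  have h0 : ¬ (i:ℕ) = 0 := by rcases h2 with ⟨t, ht⟩; omega
  have : ∀ k, cmvM n α β i k = if k = i then (starRingEnd ℂ) β else 0 := by
    intro k
    simp only [cmvM, Matrix.of_apply]
    rw [if_neg h0, if_pos h2, if_pos h3]
  rw [Finset.sum_congr rfl fun k _ => by rw [this k]]
  exact sum_ite_single _ _

lemma M_row_odd {i : Fin n} (h2 : Odd (i:ℕ)) (h3 : (i:ℕ) ≠ n-1) (h4 : (i:ℕ)+1 < n)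
    (g : Fin n → ℂ) :
    ∑ k, cmvM n α β i k * g k
      = (starRingEnd ℂ) (α i) * g i + (rhoC (α i) : ℂ) * g ⟨(i:ℕ)+1, h4⟩ := by
  have h0 : ¬ (i:ℕ) = 0 := by rcases h2 with ⟨t, ht⟩; omega
  have : ∀ k, cmvM n α β i k
      = if k = i then (starRingEnd ℂ) (α i) else if k = ⟨(i:ℕ)+1, h4⟩ then (rhoC (α i) : ℂ) else 0 := by
    intro k
    simp only [cmvM, Matrix.of_apply]
    rw [if_neg h0, if_pos h2, if_neg h3]
    refine if_congr Iff.rfl rfl (if_congr ?_ rfl rfl)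
    simp [Fin.ext_iff]
  rw [Finset.sum_congr rfl fun k _ => by rw [this k]]
  exact sum_ite_pair (ne_of_apply_ne Fin.val (by show (i:ℕ) ≠ (i:ℕ)+1; omega)) _ _ _

lemma M_row_even {i : Fin n} (h0 : (i:ℕ) ≠ 0) (h2 : ¬ Odd (i:ℕ)) (h5 : (i:ℕ) - 1 < n)
    (g : Fin n → ℂ) :
    ∑ k, cmvM n α β i k * g k
      = (rhoC (α ((i:ℕ)-1)) : ℂ) * g ⟨(i:ℕ)-1, h5⟩ + (-α ((i:ℕ)-1)) * g i := by
  have h1 : 1 ≤ (i:ℕ) := Nat.one_le_iff_ne_zero.mpr h0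
  have : ∀ k, cmvM n α β i k
      = if k = ⟨(i:ℕ)-1, h5⟩ then (rhoC (α ((i:ℕ)-1)) : ℂ) else if k = i then (-α ((i:ℕ)-1)) else 0 := by
    intro k
    simp only [cmvM, Matrix.of_apply, if_neg h0, if_neg h2]
    refine if_congr ?_ rfl rfl
    simp only [Fin.ext_iff]
    show ((k:ℕ) + 1 = (i:ℕ)) ↔ ((k:ℕ) = (i:ℕ) - 1)
    omega
  rw [Finset.sum_congr rfl fun k _ => by rw [this k]]
  exact sum_ite_pair (ne_of_apply_ne Fin.val (by show (i:ℕ)-1 ≠ (i:ℕ); omega)) _ _ _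

end Rows

section Unitary

variable {n : ℕ} {α : ℕ → ℂ} {β : ℂ}

lemma L_support {i k : Fin n} (h : cmvL n α β i k ≠ 0) : (k:ℕ)/2 = (i:ℕ)/2 := by
  simp only [cmvL, Matrix.of_apply] at h
  by_cases h2 : Even (i:ℕ) <;> simp only [if_pos, if_neg, h2, ite_true, ite_false,
    if_true, if_false] at h
  · by_cases h3 : (i:ℕ) = n-1
    · rw [if_pos h3] at h
      rcases em (k = i) with hk | hk
      · rw [hk]
      · rw [if_neg hk] at h; exact absurd rfl h
    · rw [if_neg h3] at h
      rcases em (k = i) with hk | hk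
      · rw [hk]
      · rw [if_neg hk] at h
        rcases em ((k:ℕ) = (i:ℕ)+1) with hk2 | hk2
        · obtain ⟨t, ht⟩ := h2; omega
        · rw [if_neg hk2] at h; exact absurd rfl h
  · have h2' : (i:ℕ) % 2 = 1 := Nat.odd_iff.mp (Nat.not_even_iff_odd.mp h2)
    rcases em ((k:ℕ)+1 = (i:ℕ)) with hk | hk
    · omega
    · rw [if_neg hk] at h
      rcases em (k = i) with hk2 | hk2
      · rw [hk2]
      · rw [if_neg hk2] at h; exact absurd rfl h

lemma M_support {i k : Fin n} (h : cmvM n α β i k ≠ 0) : ((k:ℕ)+1)/2 = ((i:ℕ)+1)/2 := by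
  simp only [cmvM, Matrix.of_apply] at h
  by_cases h0 : (i:ℕ) = 0
  · rw [if_pos h0] at h
    rcases em (k = i) with hk | hk
    · rw [hk]
    · rw [if_neg hk] at h; exact absurd rfl h
  · rw [if_neg h0] at h
    by_cases h2 : Odd (i:ℕ)
    · rw [if_pos h2] at h
      have h2' : (i:ℕ) % 2 = 1 := Nat.odd_iff.mp h2
      by_cases h3 : (i:ℕ) = n-1
      · rw [if_pos h3] at h
        rcases em (k = i) with hk | hk
        · rw [hk]
        · rw [if_neg hk] at h; exact absurd rfl h
      · rw [if_neg h3] at h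
        rcases em (k = i) with hk | hk
        · rw [hk]
        · rw [if_neg hk] at h
          rcases em ((k:ℕ) = (i:ℕ)+1) with hk2 | hk2
          · omega
          · rw [if_neg hk2] at h; exact absurd rfl h
    · rw [if_neg h2] at h
      have h2' : (i:ℕ) % 2 = 0 := Nat.even_iff.mp (Nat.not_odd_iff_even.mp h2)
      rcases em ((k:ℕ)+1 = (i:ℕ)) with hk | hk
      · omega
      · rw [if_neg hk] at h
        rcases em (k = i) with hk2 | hk2
        · rw [hk2]
        · rw [if_neg hk2] at h; exact absurd rfl h

end Unitary

section Unitary2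

variable {n : ℕ} {α : ℕ → ℂ} {β : ℂ}

lemma conj_mul_self_abs_one {z : ℂ} (hz : ‖z‖ = 1) :
    (starRingEnd ℂ) z * z = 1 := by
  rw [mul_comm, Complex.mul_conj, Complex.normSq_eq_norm_sq, hz]
  norm_num

lemma diag_unit {a : ℂ} (ha : ‖a‖ < 1) :
    (starRingEnd ℂ) a * a + (rhoC a : ℂ) * (rhoC a : ℂ) = 1 := by
  have h1 : (starRingEnd ℂ) a * a = ((‖a‖ ^ 2 : ℝ) : ℂ) := by
    rw [mul_comm, Complex.mul_conj, Complex.normSq_eq_norm_sq]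
  rw [h1, ← Complex.ofReal_mul, ← sq, rhoC_sq ha]
  push_cast
  ring

theorem L_mul_star (hα : ∀ j, j < n-1 → ‖α j‖ < 1) (hβ : ‖β‖ = 1) :
    cmvL n α β * (cmvL n α β)ᴴ = 1 := by
  ext i j
  rw [Matrix.mul_apply]
  simp only [Matrix.conjTranspose_apply]
  by_cases hblock : (i:ℕ)/2 = (j:ℕ)/2
  · by_cases hij : i = j
    · subst hij
      rw [Matrix.one_apply_eq]
      by_cases h2 : Even (i:ℕ)
      · by_cases h3 : (i:ℕ) = n-1
        · rw [L_row_even_last α β h2 h3]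
          have e1 : cmvL n α β i i = (starRingEnd ℂ) β := by
            simp only [cmvL, Matrix.of_apply]
            rw [if_pos h2, if_pos h3]
            all_goals simp
          rw [e1, Complex.star_def, Complex.conj_conj]
          exact conj_mul_self_abs_one hβ
        · have h4 : (i:ℕ)+1 < n := by have := i.isLt; omega
          rw [L_row_even α β h2 h3 h4]
          have e1 : cmvL n α β i i = (starRingEnd ℂ) (α (i:ℕ)) := by
            simp only [cmvL, Matrix.of_apply]
            rw [if_pos h2, if_neg h3]
            all_goals simp
          have e2 : cmvL n α β i ⟨(i:ℕ)+1, h4⟩ = ((rhoC (α (i:ℕ)) : ℝ) : ℂ) := by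
            simp only [cmvL, Matrix.of_apply]
            rw [if_pos h2, if_neg h3, if_neg (ne_of_apply_ne Fin.val (by show (i:ℕ)+1 ≠ (i:ℕ); omega))]
            all_goals simp
          rw [e1, e2, Complex.star_def, Complex.conj_conj, Complex.conj_ofReal]
          exact diag_unit (hα _ (by omega))
      · have h5 : (i:ℕ) - 1 < n := by have := i.isLt; omega
        have h1 : 1 ≤ (i:ℕ) := by
          rcases Nat.eq_zero_or_pos (i:ℕ) with h | h
          · exact absurd (h ▸ Even.zero) h2
          · exact h
        rw [L_row_odd α β h2 h5]
        have e1 : cmvL n α β i ⟨(i:ℕ)-1, h5⟩ = ((rhoC (α ((i:ℕ)-1)) : ℝ) : ℂ) := by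
          simp only [cmvL, Matrix.of_apply]
          rw [if_neg h2, if_pos (show ((⟨(i:ℕ)-1, h5⟩ : Fin n) : ℕ) + 1 = (i:ℕ) by show (i:ℕ)-1+1 = (i:ℕ); omega)]
        have e2 : cmvL n α β i i = -α ((i:ℕ)-1) := by
          simp only [cmvL, Matrix.of_apply]
          rw [if_neg h2, if_neg (show ¬((i:ℕ)+1 = (i:ℕ)) by omega)]
          all_goals simp
        rw [e1, e2, Complex.star_def, Complex.conj_ofReal]
        have ha : ‖α ((i:ℕ)-1)‖ < 1 := hα _ (by have := i.isLt; omega)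
        have := diag_unit ha
        rw [map_neg, mul_neg, neg_mul, neg_neg]
        rw [← this]; ring
    · -- same block, off diagonal
      have hv : (i:ℕ) ≠ (j:ℕ) := fun h => hij (Fin.ext h)
      rw [Matrix.one_apply_ne hij]
      have hcases : ((i:ℕ) % 2 = 0 ∧ (j:ℕ) = (i:ℕ) + 1) ∨ ((j:ℕ) % 2 = 0 ∧ (i:ℕ) = (j:ℕ) + 1) := by
        omega
      rcases hcases with ⟨he, hb⟩ | ⟨he, hb⟩
      · have h2 : Even (i:ℕ) := Nat.even_iff.mpr he
        have h4 : (i:ℕ)+1 < n := by have := j.isLt; omega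
        have h3 : (i:ℕ) ≠ n-1 := by have := j.isLt; omega
        have hodd : ¬ Even (j:ℕ) := by rw [Nat.even_iff]; omega
        rw [L_row_even α β h2 h3 h4]
        have e1 : cmvL n α β j i = ((rhoC (α ((j:ℕ)-1)) : ℝ) : ℂ) := by
          simp only [cmvL, Matrix.of_apply]
          rw [if_neg hodd, if_pos (show (i:ℕ)+1 = (j:ℕ) by omega)]
        have e2 : cmvL n α β j ⟨(i:ℕ)+1, h4⟩ = -α ((j:ℕ)-1) := by
          simp only [cmvL, Matrix.of_apply]
          rw [if_neg hodd, if_neg (show ¬(((⟨(i:ℕ)+1, h4⟩ : Fin n) : ℕ)+1 = (j:ℕ)) by show ¬((i:ℕ)+1+1 = (j:ℕ)); omega)]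
          rw [if_pos (Fin.ext (show ((⟨(i:ℕ)+1, h4⟩ : Fin n) : ℕ) = (j:ℕ) by show (i:ℕ)+1 = (j:ℕ); omega))]
        rw [e1, e2, Complex.star_def, Complex.conj_ofReal, map_neg]
        have hji : (j:ℕ)-1 = (i:ℕ) := by omega
        rw [hji]
        ring
      · have h2 : ¬ Even (i:ℕ) := by rw [Nat.even_iff]; omega
        have h5 : (i:ℕ)-1 < n := by have := i.isLt; omega
        have hje : Even (j:ℕ) := Nat.even_iff.mpr he
        have hj3 : (j:ℕ) ≠ n-1 := by have := i.isLt; omega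
        rw [L_row_odd α β h2 h5]
        have e1 : cmvL n α β j ⟨(i:ℕ)-1, h5⟩ = (starRingEnd ℂ) (α (j:ℕ)) := by
          simp only [cmvL, Matrix.of_apply]
          rw [if_pos hje, if_neg hj3]
          rw [if_pos (Fin.ext (show ((⟨(i:ℕ)-1, h5⟩ : Fin n) : ℕ) = (j:ℕ) by show (i:ℕ)-1 = (j:ℕ); omega))]
        have e2 : cmvL n α β j i = ((rhoC (α (j:ℕ)) : ℝ) : ℂ) := by
          simp only [cmvL, Matrix.of_apply]
          rw [if_pos hje, if_neg hj3, if_neg (ne_of_apply_ne Fin.val (by show (i:ℕ) ≠ (j:ℕ); omega)),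
            if_pos (show (i:ℕ) = (j:ℕ)+1 by omega)]
        rw [e1, e2, Complex.star_def, Complex.conj_conj, Complex.conj_ofReal]
        have hji : (i:ℕ)-1 = (j:ℕ) := by omega
        rw [hji]
        ring
  · -- different blocks
    have hij : i ≠ j := fun h => hblock (by rw [h])
    rw [Matrix.one_apply_ne hij]
    apply Finset.sum_eq_zero
    intro k _
    by_cases hik : cmvL n α β i k = 0
    · rw [hik, zero_mul]
    · by_cases hjk : cmvL n α β j k = 0
      · rw [hjk, star_zero, mul_zero]
      · exact absurd ((L_support hik).symm.trans (L_support hjk)) hblock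
end Unitary2

section Unitary3

variable {n : ℕ} {α : ℕ → ℂ} {β : ℂ}

theorem M_mul_star (hα : ∀ j, j < n-1 → ‖α j‖ < 1) (hβ : ‖β‖ = 1) :
    cmvM n α β * (cmvM n α β)ᴴ = 1 := by
  ext i j
  rw [Matrix.mul_apply]
  simp only [Matrix.conjTranspose_apply]
  by_cases hblock : ((i:ℕ)+1)/2 = ((j:ℕ)+1)/2
  · by_cases hij : i = j
    · subst hij
      rw [Matrix.one_apply_eq]
      by_cases h0 : (i:ℕ) = 0
      · rw [M_row_zero α β h0]
        have e1 : cmvM n α β i i = 1 := by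
          simp only [cmvM, Matrix.of_apply]
          rw [if_pos h0]
          all_goals simp
        rw [e1]
        simp
      · by_cases h2 : Odd (i:ℕ)
        · by_cases h3 : (i:ℕ) = n-1
          · rw [M_row_odd_last α β h2 h3]
            have e1 : cmvM n α β i i = (starRingEnd ℂ) β := by
              simp only [cmvM, Matrix.of_apply]
              rw [if_neg h0, if_pos h2, if_pos h3]
              all_goals simp
            rw [e1, Complex.star_def, Complex.conj_conj]
            exact conj_mul_self_abs_one hβ
          · have h4 : (i:ℕ)+1 < n := by have := i.isLt; omega
            rw [M_row_odd α β h2 h3 h4]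
            have e1 : cmvM n α β i i = (starRingEnd ℂ) (α (i:ℕ)) := by
              simp only [cmvM, Matrix.of_apply]
              rw [if_neg h0, if_pos h2, if_neg h3]
              all_goals simp
            have e2 : cmvM n α β i ⟨(i:ℕ)+1, h4⟩ = ((rhoC (α (i:ℕ)) : ℝ) : ℂ) := by
              simp only [cmvM, Matrix.of_apply]
              rw [if_neg h0, if_pos h2, if_neg h3,
                if_neg (ne_of_apply_ne Fin.val (by show (i:ℕ)+1 ≠ (i:ℕ); omega))]
              all_goals simp
            rw [e1, e2, Complex.star_def, Complex.conj_conj, Complex.conj_ofReal]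
            exact diag_unit (hα _ (by omega))
        · have h5 : (i:ℕ) - 1 < n := by have := i.isLt; omega
          have h1 : 1 ≤ (i:ℕ) := Nat.one_le_iff_ne_zero.mpr h0
          rw [M_row_even α β h0 h2 h5]
          have e1 : cmvM n α β i ⟨(i:ℕ)-1, h5⟩ = ((rhoC (α ((i:ℕ)-1)) : ℝ) : ℂ) := by
            simp only [cmvM, Matrix.of_apply]
            rw [if_neg h0, if_neg h2,
              if_pos (show ((⟨(i:ℕ)-1, h5⟩ : Fin n) : ℕ) + 1 = (i:ℕ) by show (i:ℕ)-1+1 = (i:ℕ); omega)]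
          have e2 : cmvM n α β i i = -α ((i:ℕ)-1) := by
            simp only [cmvM, Matrix.of_apply]
            rw [if_neg h0, if_neg h2, if_neg (show ¬((i:ℕ)+1 = (i:ℕ)) by omega)]
            all_goals simp
          rw [e1, e2, Complex.star_def, Complex.conj_ofReal]
          have ha : ‖α ((i:ℕ)-1)‖ < 1 := hα _ (by have := i.isLt; omega)
          have := diag_unit ha
          rw [map_neg, mul_neg, neg_mul, neg_neg]
          rw [← this]; ring
    · have hv : (i:ℕ) ≠ (j:ℕ) := fun h => hij (Fin.ext h)
      rw [Matrix.one_apply_ne hij]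
      have hcases : ((i:ℕ) % 2 = 1 ∧ (j:ℕ) = (i:ℕ) + 1) ∨ ((j:ℕ) % 2 = 1 ∧ (i:ℕ) = (j:ℕ) + 1) := by
        omega
      rcases hcases with ⟨he, hb⟩ | ⟨he, hb⟩
      · have h2 : Odd (i:ℕ) := Nat.odd_iff.mpr he
        have h0 : (i:ℕ) ≠ 0 := by omega
        have h4 : (i:ℕ)+1 < n := by have := j.isLt; omega
        have h3 : (i:ℕ) ≠ n-1 := by have := j.isLt; omega
        have hj0 : (j:ℕ) ≠ 0 := by omega
        have hjodd : ¬ Odd (j:ℕ) := by rw [Nat.odd_iff]; omega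
        rw [M_row_odd α β h2 h3 h4]
        have e1 : cmvM n α β j i = ((rhoC (α ((j:ℕ)-1)) : ℝ) : ℂ) := by
          simp only [cmvM, Matrix.of_apply]
          rw [if_neg hj0, if_neg hjodd, if_pos (show (i:ℕ)+1 = (j:ℕ) by omega)]
        have e2 : cmvM n α β j ⟨(i:ℕ)+1, h4⟩ = -α ((j:ℕ)-1) := by
          simp only [cmvM, Matrix.of_apply]
          rw [if_neg hj0, if_neg hjodd,
            if_neg (show ¬(((⟨(i:ℕ)+1, h4⟩ : Fin n) : ℕ)+1 = (j:ℕ)) by show ¬((i:ℕ)+1+1 = (j:ℕ)); omega)]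
          rw [if_pos (Fin.ext (show ((⟨(i:ℕ)+1, h4⟩ : Fin n) : ℕ) = (j:ℕ) by show (i:ℕ)+1 = (j:ℕ); omega))]
        rw [e1, e2, Complex.star_def, Complex.conj_ofReal, map_neg]
        have hji : (j:ℕ)-1 = (i:ℕ) := by omega
        rw [hji]
        ring
      · have h2 : ¬ Odd (i:ℕ) := by rw [Nat.odd_iff]; omega
        have h0 : (i:ℕ) ≠ 0 := by omega
        have h5 : (i:ℕ)-1 < n := by have := i.isLt; omega
        have hje : Odd (j:ℕ) := Nat.odd_iff.mpr he
        have hj0 : (j:ℕ) ≠ 0 := by omega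
        have hj3 : (j:ℕ) ≠ n-1 := by have := i.isLt; omega
        rw [M_row_even α β h0 h2 h5]
        have e1 : cmvM n α β j ⟨(i:ℕ)-1, h5⟩ = (starRingEnd ℂ) (α (j:ℕ)) := by
          simp only [cmvM, Matrix.of_apply]
          rw [if_neg hj0, if_pos hje, if_neg hj3]
          rw [if_pos (Fin.ext (show ((⟨(i:ℕ)-1, h5⟩ : Fin n) : ℕ) = (j:ℕ) by show (i:ℕ)-1 = (j:ℕ); omega))]
        have e2 : cmvM n α β j i = ((rhoC (α (j:ℕ)) : ℝ) : ℂ) := by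
          simp only [cmvM, Matrix.of_apply]
          rw [if_neg hj0, if_pos hje, if_neg hj3,
            if_neg (ne_of_apply_ne Fin.val (by show (i:ℕ) ≠ (j:ℕ); omega)),
            if_pos (show (i:ℕ) = (j:ℕ)+1 by omega)]
        rw [e1, e2, Complex.star_def, Complex.conj_conj, Complex.conj_ofReal]
        have hji : (i:ℕ)-1 = (j:ℕ) := by omega
        rw [hji]
        ring
  · have hij : i ≠ j := fun h => hblock (by rw [h])
    rw [Matrix.one_apply_ne hij]
    apply Finset.sum_eq_zero
    intro k _
    by_cases hik : cmvM n α β i k = 0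
    · rw [hik, zero_mul]
    · by_cases hjk : cmvM n α β j k = 0
      · rw [hjk, star_zero, mul_zero]
      · exact absurd ((M_support hik).symm.trans (M_support hjk)) hblock

theorem cmv_star_mul (hα : ∀ j, j < n-1 → ‖α j‖ < 1) (hβ : ‖β‖ = 1) :
    (CMVmat n α β)ᴴ * CMVmat n α β = 1 := by
  have hL : (cmvL n α β)ᴴ * cmvL n α β = 1 :=
    mul_eq_one_comm.mp (L_mul_star hα hβ)
  have hM : (cmvM n α β)ᴴ * cmvM n α β = 1 :=
    mul_eq_one_comm.mp (M_mul_star hα hβ)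
  rw [CMVmat, Matrix.conjTranspose_mul]
  calc (cmvM n α β)ᴴ * (cmvL n α β)ᴴ * (cmvL n α β * cmvM n α β)
      = (cmvM n α β)ᴴ * ((cmvL n α β)ᴴ * cmvL n α β) * cmvM n α β := by
        simp only [Matrix.mul_assoc]
    _ = 1 := by rw [hL, Matrix.mul_one, hM]

theorem cmv_mul_star (hα : ∀ j, j < n-1 → ‖α j‖ < 1) (hβ : ‖β‖ = 1) :
    CMVmat n α β * (CMVmat n α β)ᴴ = 1 :=
  mul_eq_one_comm.mp (cmv_star_mul hα hβ)

end Unitary3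

section Spectral

open scoped ComplexOrder

variable {n : ℕ}

/-- eigenvalues of a matrix with `Aᴴ A = 1` have modulus 1 -/
lemma eig_abs_one {A : Matrix (Fin n) (Fin n) ℂ} (hA : Aᴴ * A = 1)
    {r : ℂ} {v : Fin n → ℂ} (hv : v ≠ 0) (h : A *ᵥ v = r • v) :
    ‖r‖ = 1 := by
  have key : star (A *ᵥ v) ⬝ᵥ (A *ᵥ v) = star v ⬝ᵥ v := by
    rw [Matrix.star_mulVec, ← Matrix.dotProduct_mulVec, Matrix.mulVec_mulVec, hA,
      Matrix.one_mulVec]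
  rw [h] at key
  rw [star_smul, smul_dotProduct, dotProduct_smul, smul_smul, smul_eq_mul] at key
  have hvv : star v ⬝ᵥ v ≠ 0 := fun hc => hv (dotProduct_star_self_eq_zero.mp hc)
  have habs : (star r * r - 1) * (star v ⬝ᵥ v) = 0 := by
    rw [sub_mul, one_mul, key]; ring
  rcases mul_eq_zero.mp habs with hc | hc
  · have hconj : (starRingEnd ℂ) r * r = 1 := by
      rw [← Complex.star_def]; linear_combination hc
    have h3 : ‖(starRingEnd ℂ) r * r‖ = ‖(1:ℂ)‖ := by rw [hconj]
    rw [norm_mul, Complex.norm_conj, norm_one, ← sq] at h3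
    have h4 : (‖r‖ - 1) * (‖r‖ + 1) = 0 := by nlinarith
    rcases mul_eq_zero.mp h4 with h5 | h5
    · linarith
    · have := norm_nonneg r; linarith
  · exact absurd hc hvv

/-- for a normal matrix, `N² x = 0` implies `N x = 0` -/
lemma normal_kill_sq {N : Matrix (Fin n) (Fin n) ℂ} (hN : Nᴴ * N = N * Nᴴ)
    {x : Fin n → ℂ} (h : N *ᵥ (N *ᵥ x) = 0) : N *ᵥ x = 0 := by
  set w := N *ᵥ x with hw
  have h1 : Nᴴ *ᵥ w = 0 := by
    have h2 : star (Nᴴ *ᵥ w) ⬝ᵥ (Nᴴ *ᵥ w) = 0 := by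
      rw [Matrix.star_mulVec, Matrix.conjTranspose_conjTranspose,
        ← Matrix.dotProduct_mulVec, Matrix.mulVec_mulVec, ← hN, ← Matrix.mulVec_mulVec,
        h, Matrix.mulVec_zero, dotProduct_zero]
    exact dotProduct_star_self_eq_zero.mp h2
  have h3 : star w ⬝ᵥ w = 0 := by
    have h4 : star w ᵥ* N = 0 := by
      have := congrArg star h1
      rwa [Matrix.star_mulVec, Matrix.conjTranspose_conjTranspose, star_zero] at this
    rw [hw, Matrix.dotProduct_mulVec, h4, zero_dotProduct]
  exact dotProduct_star_self_eq_zero.mp h3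

end Spectral

section Recursion

variable {n : ℕ} {α : ℕ → ℂ} {β : ℂ}

lemma eigvec_zero (hn : 2 ≤ n) (hα : ∀ j, j < n-1 → ‖α j‖ < 1)
    {μ : ℂ} (hμ : μ ≠ 0) {v : Fin n → ℂ} (hv : CMVmat n α β *ᵥ v = μ • v)
    (h0 : v ⟨0, by omega⟩ = 0) : v = 0 := by
  set u : Fin n → ℂ := cmvM n α β *ᵥ v with hu
  have hL : cmvL n α β *ᵥ u = μ • v := by
    rw [hu, Matrix.mulVec_mulVec]
    exact hv
  have hLrow : ∀ i : Fin n, ∑ k, cmvL n α β i k * u k = μ * v i := by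
    intro i
    have := congrFun hL i
    simpa [Matrix.mulVec, dotProduct] using this
  have hMrow : ∀ i : Fin n, ∑ k, cmvM n α β i k * v k = u i := by
    intro i; rfl
  have key : ∀ k : ℕ, ∀ j : Fin n, (j : ℕ) = k → v j = 0 ∧ u j = 0 := by
    intro k
    induction k using Nat.strong_induction_on with
    | _ k IH =>
      cases k with
      | zero =>
        intro j hj
        have hj0 : j = ⟨0, by omega⟩ := Fin.ext hj
        have hvj : v j = 0 := by rw [hj0]; exact h0
        refine ⟨hvj, ?_⟩
        have e := hMrow j
        rw [M_row_zero α β hj v] at e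
        rw [← e]; exact hvj
      | succ k =>
        intro j hj
        have hkn : k + 1 < n := hj ▸ j.isLt
        have hkn' : k < n := by omega
        have hvz : ∀ j' : Fin n, (j' : ℕ) ≤ k → v j' = 0 ∧ u j' = 0 := by
          intro j' hj'
          exact IH (j' : ℕ) (by omega) j' rfl
        set jpred : Fin n := ⟨k, hkn'⟩ with hjp
        have hvzp := hvz jpred (by show k ≤ k; omega)
        by_cases h2 : Even k
        · -- k even : use the two L-rows of the block {k, k+1}
          have h2' : Even ((jpred : Fin n) : ℕ) := h2
          have h3' : ((jpred : Fin n) : ℕ) ≠ n - 1 := by show k ≠ n-1; omega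
          have h4' : ((jpred : Fin n) : ℕ) + 1 < n := by show k + 1 < n; omega
          have hρ : (rhoC (α ((jpred : Fin n) : ℕ)) : ℂ) ≠ 0 := by
            have := rhoC_pos (hα k (by omega))
            exact_mod_cast this.ne'
          have e := hLrow jpred
          rw [L_row_even α β h2' h3' h4' u] at e
          rw [hvzp.1, hvzp.2, mul_zero, mul_zero, zero_add] at e
          have husucc : u ⟨((jpred : Fin n) : ℕ) + 1, h4'⟩ = 0 := by
            rcases mul_eq_zero.mp e with h | h
            · exact absurd h hρ
            · exact h
          have hjeq : j = ⟨((jpred : Fin n) : ℕ) + 1, h4'⟩ := Fin.ext (by exact hj)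
          have huj : u j = 0 := by rw [hjeq]; exact husucc
          have hodd : ¬ Even ((j : Fin n) : ℕ) := by
            rw [hj, Nat.even_iff] at *
            omega
          have h5' : ((j : Fin n) : ℕ) - 1 < n := by omega
          have e2 := hLrow j
          rw [L_row_odd α β hodd h5' u] at e2
          have hupred : u ⟨((j : Fin n) : ℕ) - 1, h5'⟩ = 0 :=
            (hvz ⟨((j : Fin n) : ℕ) - 1, h5'⟩ (by show ((j : Fin n) : ℕ) - 1 ≤ k; omega)).2
          rw [hupred, huj, mul_zero, mul_zero, add_zero] at e2
          have hvj : v j = 0 := by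
            rcases mul_eq_zero.mp e2.symm with h | h
            · exact absurd h hμ
            · exact h
          exact ⟨hvj, huj⟩
        · -- k odd : use the two M-rows of the block {k, k+1}
          have h2' : Odd ((jpred : Fin n) : ℕ) := by
            show Odd k
            rw [Nat.even_iff] at h2
            rw [Nat.odd_iff]
            omega
          have h3' : ((jpred : Fin n) : ℕ) ≠ n - 1 := by show k ≠ n-1; omega
          have h4' : ((jpred : Fin n) : ℕ) + 1 < n := by show k + 1 < n; omega
          have hρ : (rhoC (α ((jpred : Fin n) : ℕ)) : ℂ) ≠ 0 := by
            have := rhoC_pos (hα k (by omega))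
            exact_mod_cast this.ne'
          have e := hMrow jpred
          rw [M_row_odd α β h2' h3' h4' v] at e
          rw [hvzp.1, hvzp.2, mul_zero, zero_add] at e
          have hvsucc : v ⟨((jpred : Fin n) : ℕ) + 1, h4'⟩ = 0 := by
            rcases mul_eq_zero.mp e with h | h
            · exact absurd h hρ
            · exact h
          have hjeq : j = ⟨((jpred : Fin n) : ℕ) + 1, h4'⟩ := Fin.ext (by exact hj)
          have hvj : v j = 0 := by rw [hjeq]; exact hvsucc
          have h0' : ((j : Fin n) : ℕ) ≠ 0 := by omega
          have hnodd : ¬ Odd ((j : Fin n) : ℕ) := by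
            rw [hj, Nat.odd_iff]
            rw [Nat.even_iff] at h2
            omega
          have h5' : ((j : Fin n) : ℕ) - 1 < n := by omega
          have e2 := hMrow j
          rw [M_row_even α β h0' hnodd h5' v] at e2
          have hvpred : v ⟨((j : Fin n) : ℕ) - 1, h5'⟩ = 0 :=
            (hvz ⟨((j : Fin n) : ℕ) - 1, h5'⟩ (by show ((j : Fin n) : ℕ) - 1 ≤ k; omega)).1
          rw [hvpred, hvj, mul_zero, mul_zero, add_zero] at e2
          exact ⟨hvj, e2.symm⟩
  funext j
  exact (key (j : ℕ) j rfl).1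

end Recursion

section Charpoly

variable {n : ℕ}

lemma charpoly_eval (A : Matrix (Fin n) (Fin n) ℂ) (r : ℂ) :
    (Matrix.charpoly A).eval r = (r • (1 : Matrix (Fin n) (Fin n) ℂ) - A).det := by
  have h1 : (Matrix.charmatrix A).map (Polynomial.evalRingHom r)
      = r • (1 : Matrix (Fin n) (Fin n) ℂ) - A := by
    ext i j
    by_cases h : i = j
    · subst h
      simp [Matrix.charmatrix_apply_eq, Matrix.one_apply_eq]
    · simp [Matrix.charmatrix_apply_ne _ _ _ h, Matrix.one_apply_ne h]
  rw [Matrix.charpoly, ← h1, ← RingHom.mapMatrix_apply, ← RingHom.map_det]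
  rfl

lemma charpoly_shift (A : Matrix (Fin n) (Fin n) ℂ) (μ : ℂ) :
    Matrix.charpoly (A - μ • 1) = (Matrix.charpoly A).comp (X + Polynomial.C μ) := by
  have hcomp : ∀ p : ℂ[X], p.comp (X + Polynomial.C μ)
      = (Polynomial.aeval (X + Polynomial.C μ) : ℂ[X] →ₐ[ℂ] ℂ[X]) p := by
    intro p
    rw [Polynomial.comp, Polynomial.aeval_def, Polynomial.algebraMap_eq]
  have h1 : (Matrix.charmatrix A).map
        ((Polynomial.aeval (X + Polynomial.C μ) : ℂ[X] →ₐ[ℂ] ℂ[X]) : ℂ[X] → ℂ[X])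
      = Matrix.charmatrix (A - μ • 1) := by
    ext i j
    by_cases h : i = j
    · subst h
      simp only [Matrix.map_apply, Matrix.charmatrix_apply_eq, Matrix.sub_apply,
        Matrix.smul_apply, Matrix.one_apply_eq, map_sub, Polynomial.aeval_X, Polynomial.aeval_C]
      simp only [Polynomial.algebraMap_eq, smul_eq_mul, mul_one, map_sub]
      ring
    · simp only [Matrix.map_apply, Matrix.charmatrix_apply_ne _ _ _ h, Matrix.sub_apply,
        Matrix.smul_apply, Matrix.one_apply_ne h, map_neg, Polynomial.aeval_C]
      simp [Polynomial.algebraMap_eq]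
  rw [Matrix.charpoly, ← h1, hcomp, Matrix.charpoly, ← AlgHom.mapMatrix_apply,
    ← AlgHom.map_det]

end Charpoly

section Mult

variable {n : ℕ} {α : ℕ → ℂ} {β : ℂ}

lemma root_exists_eigvec {A : Matrix (Fin n) (Fin n) ℂ} {r : ℂ}
    (hr : (Matrix.charpoly A).eval r = 0) :
    ∃ v : Fin n → ℂ, v ≠ 0 ∧ A *ᵥ v = r • v := by
  rw [charpoly_eval] at hr
  obtain ⟨v, hv0, hv⟩ := (Matrix.exists_mulVec_eq_zero_iff).mpr hr
  refine ⟨v, hv0, ?_⟩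
  rw [Matrix.sub_mulVec, Matrix.smul_mulVec, Matrix.one_mulVec] at hv
  have := sub_eq_zero.mp hv
  rw [← this]

lemma root_abs_one (hn : 2 ≤ n) (hα : ∀ j, j < n-1 → ‖α j‖ < 1)
    (hβ : ‖β‖ = 1) {r : ℂ}
    (hr : (Matrix.charpoly (CMVmat n α β)).eval r = 0) : ‖r‖ = 1 := by
  obtain ⟨v, hv0, hv⟩ := root_exists_eigvec hr
  exact eig_abs_one (cmv_star_mul hα hβ) hv0 hv

lemma cmv_normal (hα : ∀ j, j < n-1 → ‖α j‖ < 1) (hβ : ‖β‖ = 1) (r : ℂ) :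
    (CMVmat n α β - r • 1)ᴴ * (CMVmat n α β - r • 1)
      = (CMVmat n α β - r • 1) * (CMVmat n α β - r • 1)ᴴ := by
  have h1 := cmv_star_mul hα hβ
  have h2 := cmv_mul_star hα hβ
  simp only [Matrix.conjTranspose_sub, Matrix.conjTranspose_smul, Matrix.conjTranspose_one,
    Matrix.sub_mul, Matrix.mul_sub, Matrix.smul_mul, Matrix.mul_smul, Matrix.one_mul,
    Matrix.mul_one, smul_smul, h1, h2]
  rw [smul_sub, smul_sub, smul_smul, smul_smul, mul_comm r (star r)]
  abel

lemma mult_le_one (hn : 2 ≤ n) (hα : ∀ j, j < n-1 → ‖α j‖ < 1)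
    (hβ : ‖β‖ = 1) {r : ℂ} (hr1 : ‖r‖ = 1) :
    Polynomial.rootMultiplicity r (Matrix.charpoly (CMVmat n α β)) ≤ 1 := by
  set A := CMVmat n α β with hA
  set N := A - r • 1 with hN
  set φ : Module.End ℂ (Fin n → ℂ) := Matrix.toLin' N with hφ
  have hμ0 : r ≠ 0 := by
    intro h; rw [h] at hr1; simp at hr1
  have hφapp : ∀ x : Fin n → ℂ, φ x = N *ᵥ x := fun x => Matrix.toLin'_apply N x
  have hnorm := cmv_normal hα hβ r
  -- step: kernels of powers
  have hpow : ∀ (k : ℕ) (x : Fin n → ℂ), (φ ^ k) x = 0 → φ x = 0 := by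
    intro k
    induction k with
    | zero =>
      intro x hx
      rw [pow_zero, Module.End.one_apply] at hx
      rw [hx, map_zero]
    | succ k IH =>
      intro x hx
      rw [pow_succ, Module.End.mul_apply] at hx
      have h2 := IH (φ x) hx
      rw [hφapp, hφapp] at h2
      rw [hφapp]
      exact normal_kill_sq hnorm h2
  have hker : φ.maxGenEigenspace 0 = LinearMap.ker φ := by
    apply le_antisymm
    · intro x hx
      rw [Module.End.mem_maxGenEigenspace] at hx
      obtain ⟨k, hk⟩ := hx
      rw [zero_smul, sub_zero] at hk
      exact LinearMap.mem_ker.mpr (hpow k x hk)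
    · intro x hx
      rw [Module.End.mem_maxGenEigenspace]
      exact ⟨1, by rw [zero_smul, sub_zero, pow_one]; exact LinearMap.mem_ker.mp hx⟩
  -- step: kernel has dimension ≤ 1
  have hdim : Module.finrank ℂ (LinearMap.ker φ) ≤ 1 := by
    have hinj : Function.Injective
        ((LinearMap.proj (⟨0, by omega⟩ : Fin n) : (Fin n → ℂ) →ₗ[ℂ] ℂ).comp
          (Submodule.subtype (LinearMap.ker φ))) := by
      rw [← LinearMap.ker_eq_bot]
      rw [eq_bot_iff]
      intro x hx
      have hx0 : (x : Fin n → ℂ) ⟨0, by omega⟩ = 0 := hx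
      have hker : N *ᵥ (x : Fin n → ℂ) = 0 := by
        rw [← hφapp]; exact LinearMap.mem_ker.mp x.2
      have heig : A *ᵥ (x : Fin n → ℂ) = r • (x : Fin n → ℂ) := by
        rw [hN, Matrix.sub_mulVec, Matrix.smul_mulVec, Matrix.one_mulVec] at hker
        have := sub_eq_zero.mp hker
        rw [← this]
      have := eigvec_zero hn hα hμ0 heig hx0
      simp only [Submodule.mem_bot]
      exact Subtype.ext this
    calc Module.finrank ℂ (LinearMap.ker φ)
        ≤ Module.finrank ℂ ℂ := LinearMap.finrank_le_finrank_of_injective hinj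
      _ = 1 := Module.finrank_self ℂ
  -- assemble
  have e1 : Polynomial.rootMultiplicity r (Matrix.charpoly A)
      = (Matrix.charpoly N).natTrailingDegree := by
    rw [Polynomial.rootMultiplicity_eq_natTrailingDegree, charpoly_shift]
  have e2 : Matrix.charpoly N = φ.charpoly := by
    rw [hφ, ← LinearMap.charpoly_toMatrix (Matrix.toLin' N) (Pi.basisFun ℂ (Fin n)),
      LinearMap.toMatrix_eq_toMatrix', LinearMap.toMatrix'_toLin']
  rw [e1, e2, ← LinearMap.finrank_maxGenEigenspace_zero_eq, hker]
  exact hdim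

end Mult

theorem simple_spectrum_on_circle' (n : ℕ) (hn : 2 ≤ n)
    (α : ℕ → ℂ) (hα : ∀ j, j < n - 1 → ‖α j‖ < 1)
    (β : ℂ) (hβ : ‖β‖ = 1) :
    ∃ ζ : Fin n → ℂ, Function.Injective ζ ∧ (∀ j, ‖ζ j‖ = 1) ∧
      Matrix.charpoly (CMVmat n α β) = ∏ j, (Polynomial.X - Polynomial.C (ζ j)) := by
  set p := Matrix.charpoly (CMVmat n α β) with hp
  have hmonic : p.Monic := (CMVmat n α β).charpoly_monic
  have hdeg : p.natDegree = n := by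
    rw [hp, Matrix.charpoly_natDegree_eq_dim, Fintype.card_fin]
  have hp0 : p ≠ 0 := hmonic.ne_zero
  have hsplits : p.Splits := IsAlgClosed.splits p
  have hcard : p.roots.card = p.natDegree := (Polynomial.splits_iff_card_roots).mp hsplits
  have hnodup : p.roots.Nodup := by
    rw [Multiset.nodup_iff_count_le_one]
    intro a
    rw [Polynomial.count_roots]
    by_cases ha : p.eval a = 0
    · exact mult_le_one hn hα hβ (root_abs_one hn hα hβ ha)
    · rw [Polynomial.rootMultiplicity_eq_zero ha]
      omega
  set l := p.roots.toList with hl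
  have hcoe : (l : Multiset ℂ) = p.roots := Multiset.coe_toList _
  have hlen : l.length = n := by
    rw [hl, Multiset.length_toList, hcard, hdeg]
  have hlnd : l.Nodup := by
    have := Multiset.coe_nodup (l := l)
    rw [hcoe] at this
    exact this.mp hnodup
  refine ⟨fun j => l.get (Fin.cast hlen.symm j), ?_, ?_, ?_⟩
  · exact (List.nodup_iff_injective_get.mp hlnd).comp fun a b hab => by
      simpa [Fin.ext_iff] using hab
  · intro j
    have hmem : l.get (Fin.cast hlen.symm j) ∈ l :=
      List.get_mem l (Fin.cast hlen.symm j)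
    have : l.get (Fin.cast hlen.symm j) ∈ p.roots := by
      rw [← hcoe]
      exact_mod_cast hmem
    have hroot := (Polynomial.mem_roots hp0).mp this
    exact root_abs_one hn hα hβ hroot
  · have hfact : (p.roots.map (fun a => Polynomial.X - Polynomial.C a)).prod = p :=
      Polynomial.prod_multiset_X_sub_C_of_monic_of_roots_card_eq hmonic hcard
    rw [← hfact, ← hcoe]
    rw [Multiset.map_coe, Multiset.prod_coe]
    have hofn : List.ofFn l.get = l := List.ofFn_get l
    conv_lhs => rw [← hofn]
    rw [List.map_ofFn, List.prod_ofFn]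
    refine Fintype.prod_equiv (finCongr hlen) _ _ ?_
    intro i
    rfl


/-- a finite CMV matrix has simple spectrum on the unit circle:
`det (zI − C) = ∏ (z − ζ_j)` with `ζ_j ∈ 𝕋` pairwise distinct. -/
theorem simple_spectrum_on_circle (n : ℕ) (hn : 2 ≤ n)
    (α : ℕ → ℂ) (hα : ∀ j, j < n - 1 → ‖α j‖ < 1)
    (β : ℂ) (hβ : ‖β‖ = 1) :
    ∃ ζ : Fin n → ℂ, Function.Injective ζ ∧ (∀ j, ‖ζ j‖ = 1) ∧
      Matrix.charpoly (CMVmat n α β) = ∏ j, (Polynomial.X - Polynomial.C (ζ j)) := by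
  exact simple_spectrum_on_circle' n hn α hα β hβ

end CMVPaper
end
end

section
/- Let Z_l = {z_{j,l}}_{j=1}^m, l = 1,2, be two m-point sets on the unit circle 𝕋 with Z₁ ∩ Z₂ = ∅, labeled z_{j,l} = e^{ix_{j,l}} with 0 ≤ x_{1,l} < x_{2,l} < … < x_{m,l} < 2π. For k = 1,…,m define ω_k = (∏_{j=1}^m sin((x_{k,1}−x_{j,2})/2)) / (∏_{j=1, j≠k}^m sin((x_{k,1}−x_{j,1})/2)); each ω_k is a nonzero real number. Then Z₁ and Z₂ interlace if and only if all the numbers ω₁,…,ω_m have the same sign. -/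
open Complex Polynomial Matrix BigOperators Finset

noncomputable section

namespace CMVPaper

lemma prod_pos_iff_even {ι : Type*} [DecidableEq ι] (s : Finset ι) (f : ι → ℝ)
    (h : ∀ i ∈ s, f i ≠ 0) :
    (0 < ∏ i ∈ s, f i) ↔ Even (s.filter (fun i => f i < 0)).card := by
  induction s using Finset.induction with
  | empty => simp
  | insert a s hx ih =>
    have ha : f a ≠ 0 := h a (mem_insert_self a s)
    have hs : ∀ i ∈ s, f i ≠ 0 := fun i hi => h i (mem_insert_of_mem hi)
    have hps : ∏ i ∈ s, f i ≠ 0 := prod_ne_zero_iff.2 hs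
    rw [prod_insert hx, filter_insert]
    rcases lt_or_gt_of_ne ha with hneg | hpos
    · rw [if_pos hneg, card_insert_of_notMem (fun hc => hx (mem_of_mem_filter a hc)),
        Nat.even_add_one, ← ih hs, mul_pos_iff]
      constructor
      · rintro (⟨h1, _⟩ | ⟨_, h2⟩)
        · exact absurd h1 (asymm hneg)
        · exact fun hp => absurd h2 (asymm hp)
      · intro hnp
        exact Or.inr ⟨hneg, hps.lt_or_gt.resolve_right hnp⟩
    · rw [if_neg (not_lt.2 hpos.le), ← ih hs, mul_pos_iff]
      constructor
      · rintro (⟨_, h2⟩ | ⟨h1, _⟩)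
        · exact h2
        · exact absurd hpos (asymm h1)
      · exact fun hp => Or.inl ⟨hpos, hp⟩

lemma exp_I_inj {a b : ℝ} (ha : 0 ≤ a) (ha2 : a < 2 * Real.pi) (hb : 0 ≤ b)
    (hb2 : b < 2 * Real.pi) (h : Complex.exp (Complex.I * a) = Complex.exp (Complex.I * b)) :
    a = b := by
  rw [Complex.exp_eq_exp_iff_exists_int] at h
  obtain ⟨n, hn⟩ := h
  have him := congrArg Complex.im hn
  simp [Complex.mul_im, Complex.add_im] at him
  have hpi := Real.pi_pos
  have h1 : (-1 : ℝ) < n := by nlinarith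
  have h2 : (n : ℝ) < 1 := by nlinarith
  have h3 : n = 0 := by
    have := (by exact_mod_cast h1 : (-1:ℤ) < n)
    have := (by exact_mod_cast h2 : n < (1:ℤ))
    omega
  rw [h3] at him
  simpa using him

lemma strictMono_range_eq {m : ℕ} {f g : Fin m → ℝ} (hf : StrictMono f) (hg : StrictMono g)
    (h : Set.range f = Set.range g) : f = g := by
  have hcard : (Finset.image g univ).card = m := by
    rw [Finset.card_image_of_injective _ hg.injective, card_univ, Fintype.card_fin]
  have hfs : ∀ x, f x ∈ Finset.image g univ := by
    intro x
    have : f x ∈ Set.range g := h ▸ Set.mem_range_self x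
    obtain ⟨y, hy⟩ := this
    exact Finset.mem_image.2 ⟨y, mem_univ y, hy⟩
  have hgs : ∀ x, g x ∈ Finset.image g univ := fun x => Finset.mem_image.2 ⟨x, mem_univ x, rfl⟩
  exact (Finset.orderEmbOfFin_unique hcard hfs hf).trans
    (Finset.orderEmbOfFin_unique hcard hgs hg).symm

lemma comb (m : ℕ) (hm : 1 ≤ m) (c : Fin m → ℕ)
    (hmono : ∀ j k : Fin m, j ≤ k → c j ≤ c k) (hub : ∀ k, c k ≤ m)
    (hpar : ∀ j k : Fin m, (Even (c j + (j:ℕ)) ↔ Even (c k + (k:ℕ)))) :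
    (∀ k, c k = (k:ℕ)) ∨ (∀ k, c k = (k:ℕ) + 1) := by
  have h0 : 0 < m := hm
  have step : ∀ n (h : n + 1 < m), c ⟨n, by omega⟩ + 1 ≤ c ⟨n+1, h⟩ := by
    intro n h
    have hle : c ⟨n, by omega⟩ ≤ c ⟨n+1, h⟩ := hmono _ _ (by simp [Fin.mk_le_mk])
    have hp := hpar ⟨n, by omega⟩ ⟨n+1, h⟩
    simp only [Nat.even_iff] at hp
    omega
  have gen : ∀ d a (h : a + d < m), c ⟨a, by omega⟩ + d ≤ c ⟨a + d, h⟩ := by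
    intro d
    induction d with
    | zero => intro a h; simp
    | succ d ih =>
      intro a h
      have h1 : a + d < m := by omega
      have := ih a h1
      have := step (a + d) (by omega : a + d + 1 < m)
      have he : (⟨a + (d+1), h⟩ : Fin m) = ⟨a + d + 1, by omega⟩ := by
        apply Fin.ext; simp; omega
      rw [he]
      omega
  have lower : ∀ k : Fin m, c ⟨0, h0⟩ + (k:ℕ) ≤ c k := by
    intro k
    have := gen (k:ℕ) 0 (by simpa using k.isLt)
    simpa using this
  have upper : ∀ k : Fin m, c k + (m - 1 - (k:ℕ)) ≤ c ⟨m-1, by omega⟩ := by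
    intro k
    have hk := k.isLt
    have := gen (m - 1 - (k:ℕ)) (k:ℕ) (by omega)
    have he : (⟨(k:ℕ) + (m - 1 - (k:ℕ)), by omega⟩ : Fin m) = ⟨m-1, by omega⟩ := by
      apply Fin.ext; simp; omega
    rw [he] at this
    have he2 : (⟨(k:ℕ), by omega⟩ : Fin m) = k := by apply Fin.ext; simp
    rwa [he2] at this
  have hc0 : c ⟨0, h0⟩ ≤ 1 := by
    have h1 := lower ⟨m-1, by omega⟩
    have h2 := hub ⟨m-1, by omega⟩
    simp at h1
    omega
  by_cases he : Even (c ⟨0, h0⟩)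
  · left
    intro k
    have hl := lower k
    have hu := upper k
    have hub2 := hub ⟨m-1, by omega⟩
    have hp := hpar ⟨0, h0⟩ k
    have hk := k.isLt
    simp only [Nat.even_iff] at hp he
    omega
  · right
    intro k
    have hl := lower k
    have hu := upper k
    have hub2 := hub ⟨m-1, by omega⟩
    have hp := hpar ⟨0, h0⟩ k
    have hk := k.isLt
    simp only [Nat.even_iff] at hp he
    omega


lemma sin_half_pos {a b : ℝ} (ha : 0 ≤ a) (ha2 : a < 2 * Real.pi) (hb : 0 ≤ b)
    (hb2 : b < 2 * Real.pi) (h : b < a) : 0 < Real.sin ((a - b) / 2) :=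
  Real.sin_pos_of_pos_of_lt_pi (by linarith) (by linarith)

lemma sin_half_neg {a b : ℝ} (ha : 0 ≤ a) (ha2 : a < 2 * Real.pi) (hb : 0 ≤ b)
    (hb2 : b < 2 * Real.pi) (h : a < b) : Real.sin ((a - b) / 2) < 0 := by
  have h1 := sin_half_pos hb hb2 ha ha2 h
  have e : (a - b) / 2 = -((b - a) / 2) := by ring
  rw [e, Real.sin_neg]
  linarith



lemma omega_sign {m : ℕ} (x₁ x₂ : Fin m → ℝ)
    (hr₁ : ∀ j, 0 ≤ x₁ j ∧ x₁ j < 2 * Real.pi)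
    (hr₂ : ∀ j, 0 ≤ x₂ j ∧ x₂ j < 2 * Real.pi)
    (hmono₁ : StrictMono x₁)
    (hdisj : ∀ j k, x₁ j ≠ x₂ k) (k : Fin m) :
    (∏ j, Real.sin ((x₁ k - x₂ j) / 2)) ≠ 0 ∧
    (∏ j ∈ Finset.univ.erase k, Real.sin ((x₁ k - x₁ j) / 2)) ≠ 0 ∧
    (0 < (∏ j, Real.sin ((x₁ k - x₂ j) / 2)) /
        (∏ j ∈ Finset.univ.erase k, Real.sin ((x₁ k - x₁ j) / 2)) ↔
      ¬ Even ((Finset.univ.filter fun j => x₂ j < x₁ k).card + (k : ℕ))) := by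
  have hne_num : ∀ j ∈ (univ : Finset (Fin m)), Real.sin ((x₁ k - x₂ j) / 2) ≠ 0 := by
    intro j _
    rcases lt_or_gt_of_ne (hdisj k j) with h | h
    · exact ne_of_lt (sin_half_neg (hr₁ k).1 (hr₁ k).2 (hr₂ j).1 (hr₂ j).2 h)
    · exact ne_of_gt (sin_half_pos (hr₁ k).1 (hr₁ k).2 (hr₂ j).1 (hr₂ j).2 h)
  have hne_den : ∀ j ∈ univ.erase k, Real.sin ((x₁ k - x₁ j) / 2) ≠ 0 := by
    intro j hj
    have hjk : j ≠ k := (mem_erase.1 hj).1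
    rcases lt_or_gt_of_ne (fun h => hjk (hmono₁.injective h.symm)) with h | h
    · exact ne_of_lt (sin_half_neg (hr₁ k).1 (hr₁ k).2 (hr₁ j).1 (hr₁ j).2 h)
    · exact ne_of_gt (sin_half_pos (hr₁ k).1 (hr₁ k).2 (hr₁ j).1 (hr₁ j).2 h)
  have hnum_ne : (∏ j, Real.sin ((x₁ k - x₂ j) / 2)) ≠ 0 := prod_ne_zero_iff.2 hne_num
  have hden_ne : (∏ j ∈ univ.erase k, Real.sin ((x₁ k - x₁ j) / 2)) ≠ 0 :=
    prod_ne_zero_iff.2 hne_den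
  refine ⟨hnum_ne, hden_ne, ?_⟩
  -- positivity of numerator
  have hfn : univ.filter (fun j => Real.sin ((x₁ k - x₂ j) / 2) < 0)
      = univ.filter (fun j => x₁ k < x₂ j) := by
    ext j
    simp only [mem_filter, mem_univ, true_and]
    constructor
    · intro hs
      by_contra hx
      have h2 : x₂ j < x₁ k := lt_of_le_of_ne (not_lt.1 hx) (Ne.symm (hdisj k j))
      exact absurd (sin_half_pos (hr₁ k).1 (hr₁ k).2 (hr₂ j).1 (hr₂ j).2 h2) (asymm hs)
    · intro hx
      exact sin_half_neg (hr₁ k).1 (hr₁ k).2 (hr₂ j).1 (hr₂ j).2 hx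
  have hnum : 0 < (∏ j, Real.sin ((x₁ k - x₂ j) / 2)) ↔
      Even (univ.filter (fun j => x₁ k < x₂ j)).card := by
    rw [prod_pos_iff_even _ _ hne_num, hfn]
  have hfd : (univ.erase k).filter (fun j => Real.sin ((x₁ k - x₁ j) / 2) < 0)
      = univ.filter (fun j => k < j) := by
    ext j
    simp only [mem_filter, mem_erase, mem_univ, true_and, and_true]
    constructor
    · rintro ⟨hjk, hs⟩
      by_contra hx
      have hjk2 : j < k := lt_of_le_of_ne (not_lt.1 hx) hjk
      have h2 : x₁ j < x₁ k := hmono₁ hjk2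
      exact absurd (sin_half_pos (hr₁ k).1 (hr₁ k).2 (hr₁ j).1 (hr₁ j).2 h2) (asymm hs)
    · intro hx
      exact ⟨ne_of_gt hx, sin_half_neg (hr₁ k).1 (hr₁ k).2 (hr₁ j).1 (hr₁ j).2 (hmono₁ hx)⟩
  have hden : 0 < (∏ j ∈ univ.erase k, Real.sin ((x₁ k - x₁ j) / 2)) ↔
      Even (univ.filter (fun j => k < j)).card := by
    rw [prod_pos_iff_even _ _ hne_den, hfd]
  -- card counts
  have hcd : (univ.filter (fun j => x₂ j < x₁ k)).card
      + (univ.filter (fun j => x₁ k < x₂ j)).card = m := by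
    have h1 := Finset.card_filter_add_card_filter_not
      (s := (univ : Finset (Fin m))) (p := fun j => x₂ j < x₁ k)
    have h2 : univ.filter (fun j => ¬ x₂ j < x₁ k) = univ.filter (fun j => x₁ k < x₂ j) := by
      ext j
      simp only [mem_filter, mem_univ, true_and, not_lt]
      exact ⟨fun h => lt_of_le_of_ne h (hdisj k j), fun h => h.le⟩
    rw [h2] at h1
    simpa using h1
  have hek : (univ.filter (fun j => k < j)).card + ((k : ℕ) + 1) = m := by
    have h1 := Finset.card_filter_add_card_filter_not
      (s := (univ : Finset (Fin m))) (p := fun j => k < j)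
    have h2 : univ.filter (fun j => ¬ k < j) = Iic k := by
      ext j
      simp [not_lt]
    rw [h2, Fin.card_Iic] at h1
    simpa using h1
  -- assemble
  have hnum' : (∏ j, Real.sin ((x₁ k - x₂ j) / 2)) < 0 ↔
      ¬ Even (univ.filter (fun j => x₁ k < x₂ j)).card := by
    rw [← hnum]
    exact ⟨fun h => fun hp => absurd h (asymm hp),
      fun h => hnum_ne.lt_or_gt.resolve_right h⟩
  have hden' : (∏ j ∈ univ.erase k, Real.sin ((x₁ k - x₁ j) / 2)) < 0 ↔
      ¬ Even (univ.filter (fun j => k < j)).card := by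
    rw [← hden]
    exact ⟨fun h => fun hp => absurd h (asymm hp),
      fun h => hden_ne.lt_or_gt.resolve_right h⟩
  rw [div_pos_iff, hnum, hden, hnum', hden']
  have hk := k.isLt
  simp only [Nat.even_iff] at *
  omega

lemma pattern_one {m : ℕ} (x₁ x₂ : Fin m → ℝ)
    (hmono₁ : StrictMono x₁) (hmono₂ : StrictMono x₂)
    (hdisj : ∀ j k, x₁ j ≠ x₂ k) :
    (∀ k : Fin m, (Finset.univ.filter fun j => x₂ j < x₁ k).card = (k : ℕ)) ↔
      (∀ j : Fin m, x₁ j < x₂ j ∧ ∀ h : (j : ℕ) + 1 < m, x₂ j < x₁ ⟨(j : ℕ) + 1, h⟩) := by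
  constructor
  · intro hc j
    constructor
    · by_contra hx
      have hlt : x₂ j < x₁ j := lt_of_le_of_ne (not_lt.1 hx) (Ne.symm (hdisj j j))
      have hsub : Iic j ⊆ univ.filter (fun i => x₂ i < x₁ j) := by
        intro i hi
        simp only [mem_Iic] at hi
        simp only [mem_filter, mem_univ, true_and]
        exact lt_of_le_of_lt (hmono₂.monotone hi) hlt
      have hle := Finset.card_le_card hsub
      rw [Fin.card_Iic, hc j] at hle
      omega
    · intro h
      by_contra hx
      have hlt : x₁ ⟨(j:ℕ)+1, h⟩ < x₂ j := lt_of_le_of_ne (not_lt.1 hx) (hdisj _ _)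
      have hsub : univ.filter (fun i => x₂ i < x₁ ⟨(j:ℕ)+1, h⟩) ⊆ Iio j := by
        intro i hi
        simp only [mem_filter, mem_univ, true_and] at hi
        simp only [mem_Iio]
        exact hmono₂.lt_iff_lt.1 (hi.trans hlt)
      have hle := Finset.card_le_card hsub
      rw [hc _, Fin.card_Iio] at hle
      simp at hle
  · intro hp k
    have heq : univ.filter (fun i => x₂ i < x₁ k) = Iio k := by
      ext i
      simp only [mem_filter, mem_univ, true_and, mem_Iio]
      constructor
      · intro hi
        by_contra hik
        have hki : k ≤ i := not_lt.1 hik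
        exact absurd hi (not_lt.2 ((hmono₁.monotone hki).trans (hp i).1.le))
      · intro hik
        have hik' : (i : ℕ) < (k : ℕ) := hik
        have h1 : (i : ℕ) + 1 < m := by have := k.isLt; omega
        have h2 := (hp i).2 h1
        have h3 : x₁ ⟨(i:ℕ)+1, h1⟩ ≤ x₁ k := hmono₁.monotone (by
          rw [Fin.le_def]; simpa using hik')
        linarith
    rw [heq, Fin.card_Iio]

lemma pattern_two {m : ℕ} (x₁ x₂ : Fin m → ℝ)
    (hmono₁ : StrictMono x₁) (hmono₂ : StrictMono x₂)
    (hdisj : ∀ j k, x₁ j ≠ x₂ k) :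
    (∀ k : Fin m, (Finset.univ.filter fun j => x₂ j < x₁ k).card = (k : ℕ) + 1) ↔
      (∀ j : Fin m, x₂ j < x₁ j ∧ ∀ h : (j : ℕ) + 1 < m, x₁ j < x₂ ⟨(j : ℕ) + 1, h⟩) := by
  constructor
  · intro hc j
    constructor
    · by_contra hx
      have hlt : x₁ j < x₂ j := lt_of_le_of_ne (not_lt.1 hx) (hdisj j j)
      have hsub : univ.filter (fun i => x₂ i < x₁ j) ⊆ Iio j := by
        intro i hi
        simp only [mem_filter, mem_univ, true_and] at hi
        simp only [mem_Iio]
        exact hmono₂.lt_iff_lt.1 (hi.trans hlt)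
      have hle := Finset.card_le_card hsub
      rw [hc j, Fin.card_Iio] at hle
      omega
    · intro h
      by_contra hx
      have hlt : x₂ ⟨(j:ℕ)+1, h⟩ < x₁ j :=
        lt_of_le_of_ne (not_lt.1 hx) (Ne.symm (hdisj j ⟨(j:ℕ)+1, h⟩))
      have hsub : Iic (⟨(j:ℕ)+1, h⟩ : Fin m) ⊆ univ.filter (fun i => x₂ i < x₁ j) := by
        intro i hi
        simp only [mem_Iic] at hi
        simp only [mem_filter, mem_univ, true_and]
        exact lt_of_le_of_lt (hmono₂.monotone hi) hlt
      have hle := Finset.card_le_card hsub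
      rw [Fin.card_Iic, hc j] at hle
      simp at hle
  · intro hp k
    have heq : univ.filter (fun i => x₂ i < x₁ k) = Iic k := by
      ext i
      simp only [mem_filter, mem_univ, true_and, mem_Iic]
      constructor
      · intro hi
        by_contra hik
        have hki : k < i := not_le.1 hik
        have hki' : (k : ℕ) < (i : ℕ) := hki
        have h1 : (k : ℕ) + 1 < m := by have := i.isLt; omega
        have h2 := (hp k).2 h1
        have h3 : x₂ ⟨(k:ℕ)+1, h1⟩ ≤ x₂ i := hmono₂.monotone (by
          rw [Fin.le_def]; simpa using hki')
        linarith
      · intro hik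
        exact lt_of_le_of_lt (hmono₂.monotone hik) (hp k).1
    rw [heq, Fin.card_Iic]


lemma range_real_eq {m : ℕ} {x y : Fin m → ℝ}
    (hx : ∀ j, 0 ≤ x j ∧ x j < 2 * Real.pi) (hy : ∀ j, 0 ≤ y j ∧ y j < 2 * Real.pi)
    (h : Set.range (fun j => Complex.exp (Complex.I * (x j : ℂ)))
        = Set.range (fun j => Complex.exp (Complex.I * (y j : ℂ)))) :
    Set.range x = Set.range y := by
  have sub : ∀ (u v : Fin m → ℝ), (∀ j, 0 ≤ u j ∧ u j < 2 * Real.pi) →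
      (∀ j, 0 ≤ v j ∧ v j < 2 * Real.pi) →
      Set.range (fun j => Complex.exp (Complex.I * (u j : ℂ)))
        ⊆ Set.range (fun j => Complex.exp (Complex.I * (v j : ℂ))) →
      Set.range u ⊆ Set.range v := by
    intro u v hu hv hsub
    rintro t ⟨j, rfl⟩
    obtain ⟨i, hi⟩ := hsub ⟨j, rfl⟩
    exact ⟨i, exp_I_inj (hv i).1 (hv i).2 (hu j).1 (hu j).2 hi⟩
  exact Set.eq_of_subset_of_subset (sub x y hx hy h.le) (sub y x hy hx h.ge)

/-- Proposition 3: for disjoint `m`-point sets `Z₁ = {e^{i x_{j,1}}}`,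
`Z₂ = {e^{i x_{j,2}}}` on `𝕋` (labels increasing in `[0, 2π)`), the quantities
`ω_k = ∏_j sin((x_{k,1}−x_{j,2})/2) / ∏_{j≠k} sin((x_{k,1}−x_{j,1})/2)` are nonzero, and
`Z₁`, `Z₂` interlace iff all `ω_k` have the same sign. -/
theorem interlacing_criterion (m : ℕ) (hm : 1 ≤ m) (x₁ x₂ : Fin m → ℝ)
    (hr₁ : ∀ j, 0 ≤ x₁ j ∧ x₁ j < 2 * Real.pi)
    (hr₂ : ∀ j, 0 ≤ x₂ j ∧ x₂ j < 2 * Real.pi)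
    (hmono₁ : StrictMono x₁) (hmono₂ : StrictMono x₂)
    (hdisj : ∀ j k, x₁ j ≠ x₂ k) :
    let ω : Fin m → ℝ := fun k =>
      (∏ j, Real.sin ((x₁ k - x₂ j) / 2)) /
        (∏ j ∈ Finset.univ.erase k, Real.sin ((x₁ k - x₁ j) / 2))
    (∀ k, ω k ≠ 0) ∧
    (InterlaceOnT m (Set.range fun j => Complex.exp (Complex.I * (x₁ j : ℂ)))
        (Set.range fun j => Complex.exp (Complex.I * (x₂ j : ℂ))) ↔
      ((∀ k, 0 < ω k) ∨ (∀ k, ω k < 0))) := by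
  intro ω
  have hωdef : ∀ k, ω k = (∏ j, Real.sin ((x₁ k - x₂ j) / 2)) /
      (∏ j ∈ Finset.univ.erase k, Real.sin ((x₁ k - x₁ j) / 2)) := fun k => rfl
  set c : Fin m → ℕ := fun k => (Finset.univ.filter fun j => x₂ j < x₁ k).card with hc
  have hsg := fun k => omega_sign x₁ x₂ hr₁ hr₂ hmono₁ hdisj k
  have hne : ∀ k, ω k ≠ 0 := by
    intro k
    rw [hωdef k]
    exact div_ne_zero (hsg k).1 (hsg k).2.1
  have hpos : ∀ k, (0 < ω k ↔ ¬ Even (c k + (k : ℕ))) := by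
    intro k
    rw [hωdef k]
    exact (hsg k).2.2
  have hneg : ∀ k, (ω k < 0 ↔ Even (c k + (k : ℕ))) := by
    intro k
    have h1 : ω k < 0 ↔ ¬ (0 < ω k) :=
      ⟨fun h hp => absurd h (asymm hp), fun h => ((hne k).lt_or_gt).resolve_right h⟩
    rw [h1, hpos k, not_not]
  refine ⟨hne, ?_⟩
  -- chain of equivalences
  have step1 : ((∀ k, 0 < ω k) ∨ (∀ k, ω k < 0)) ↔
      ((∀ k, ¬ Even (c k + (k : ℕ))) ∨ (∀ k, Even (c k + (k : ℕ)))) :=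
    or_congr (forall_congr' hpos) (forall_congr' hneg)
  have step2 : ((∀ k, ¬ Even (c k + (k : ℕ))) ∨ (∀ k, Even (c k + (k : ℕ)))) ↔
      ((∀ k, c k = (k : ℕ)) ∨ (∀ k, c k = (k : ℕ) + 1)) := by
    constructor
    · intro h
      apply comb m hm c
      · intro j k hjk
        apply Finset.card_le_card
        intro i hi
        simp only [mem_filter, mem_univ, true_and] at hi ⊢
        exact lt_of_lt_of_le hi (hmono₁.monotone hjk)
      · intro k
        simpa using Finset.card_le_card (Finset.filter_subset _ (univ : Finset (Fin m)))
      · intro j k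
        rcases h with h | h
        · simp [h j, h k]
        · simp [h j, h k]
    · rintro (h | h)
      · right
        intro k
        rw [h k]
        exact ⟨(k : ℕ), rfl⟩
      · left
        intro k
        rw [h k]
        simp only [Nat.even_iff]
        omega
  have step3 : ((∀ k, c k = (k : ℕ)) ∨ (∀ k, c k = (k : ℕ) + 1)) ↔
      ((∀ j : Fin m, x₁ j < x₂ j ∧ ∀ h : (j : ℕ) + 1 < m, x₂ j < x₁ ⟨(j : ℕ) + 1, h⟩) ∨
       (∀ j : Fin m, x₂ j < x₁ j ∧ ∀ h : (j : ℕ) + 1 < m, x₁ j < x₂ ⟨(j : ℕ) + 1, h⟩)) :=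
    or_congr (pattern_one x₁ x₂ hmono₁ hmono₂ hdisj) (pattern_two x₁ x₂ hmono₁ hmono₂ hdisj)
  rw [step1, step2, step3]
  constructor
  · rintro ⟨y₁, y₂, hy₁, hy₂, hm₁, hm₂, hZ₁, hZ₂, hpat⟩
    have e₁ : y₁ = x₁ :=
      strictMono_range_eq hm₁ hmono₁ (range_real_eq hy₁ hr₁ hZ₁.symm)
    have e₂ : y₂ = x₂ :=
      strictMono_range_eq hm₂ hmono₂ (range_real_eq hy₂ hr₂ hZ₂.symm)
    rw [e₁, e₂] at hpat
    exact hpat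
  · intro h
    exact ⟨x₁, x₂, hr₁, hr₂, hmono₁, hmono₂, rfl, rfl, h⟩


end CMVPaper
end
end

section
/- Let C₁ = C(α₀,…,α_{n-3},α_{n-2};β₁) and C₂ = C(α₀,…,α_{n-3};β₂) be finite CMV matrices of orders n and n−1 respectively, with Φ_{n-1}(z) = det(zI − C₁^{(n-1)}), Φ̃_n(z) = det(zI − C₁), and Φ̃_{n-1}(z) = det(zI − C₂). Set A = conj(β₁)·ρ_{n-2}²/(conj(β₂) − conj(α_{n-2})) with ρ_{n-2}² = 1 − |α_{n-2}|², and B = conj(β₁)·β₂·(1 − conj(β₂)·α_{n-2})/(1 − β₂·conj(α_{n-2})). Then A ≠ 0, |B| = 1, and the polynomial identity Φ̃_n(z) − A·Φ̃_{n-1}(z) = (z − B)·Φ_{n-1}(z) holds. -/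
open Complex Polynomial Matrix BigOperators Finset

noncomputable section

namespace CMVPaper

lemma eval_charpoly' {k : ℕ} (M : Matrix (Fin k) (Fin k) ℂ) (z : ℂ) :
    (Matrix.charpoly M).eval z = Matrix.det (z • (1 : Matrix (Fin k) (Fin k) ℂ) - M) := by
  rw [Matrix.charpoly, ← Polynomial.coe_evalRingHom, RingHom.map_det]
  congr 1
  ext i j
  by_cases h : i = j
  · subst h; simp [Matrix.one_apply]
  · simp [Matrix.charmatrix_apply_ne _ _ _ h, Matrix.one_apply, h]

lemma core (m : ℕ) (C₁ : Matrix (Fin (m+2)) (Fin (m+2)) ℂ)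
    (C₂ : Matrix (Fin (m+1)) (Fin (m+1)) ℂ) (u : Fin (m+2) → ℂ) (a b₁ b₂ r : ℂ)
    (i0 i1 : Fin (m+2)) (hi0 : (i0 : ℕ) = m) (hi1 : (i1 : ℕ) = m + 1)
    (h1 : ∀ i j : Fin (m+1), (i:ℕ) < m → C₂ i j = C₁ i.castSucc j.castSucc)
    (h2 : ∀ i : Fin (m+2), (i:ℕ) < m → C₁ i i1 = 0)
    (h3 : ∀ j, C₁ i0 j = (starRingEnd ℂ) a * u j
        + r * (starRingEnd ℂ) b₁ * (if j = i1 then 1 else 0))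
    (h4 : ∀ j, C₁ i1 j = r * u j - a * (starRingEnd ℂ) b₁ * (if j = i1 then 1 else 0))
    (h5 : ∀ j : Fin (m+1), C₂ (Fin.last m) j = (starRingEnd ℂ) b₂ * u j.castSucc)
    (h6 : u i1 = 0)
    (h7 : r * r = 1 - (starRingEnd ℂ) a * a) (z : ℂ) :
    ∃ P Q : ℂ,
      Matrix.det (z • (1 : Matrix (Fin (m+2)) (Fin (m+2)) ℂ) - C₁)
        = (z + a * (starRingEnd ℂ) b₁) * (z * P - (starRingEnd ℂ) a * Q)
          - (1 - (starRingEnd ℂ) a * a) * ((starRingEnd ℂ) b₁ * Q) ∧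
      Matrix.det (z • (1 : Matrix (Fin (m+1)) (Fin (m+1)) ℂ) - C₂)
        = z * P - (starRingEnd ℂ) b₂ * Q ∧
      Matrix.det (z • (1 : Matrix (Fin (m+1)) (Fin (m+1)) ℂ)
          - C₁.submatrix Fin.castSucc Fin.castSucc)
        = z * P - (starRingEnd ℂ) a * Q := by
  have hne : i0 ≠ i1 := by
    intro h; rw [Fin.ext_iff, hi0, hi1] at h; omega
  have hlast : i1 = Fin.last (m+1) := by
    rw [Fin.ext_iff, hi1]; simp
  set N : Matrix (Fin (m+2)) (Fin (m+2)) ℂ := z • 1 - C₁ with hN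
  set e0 : Fin (m+2) → ℂ := fun j => if j = i0 then 1 else 0 with he0
  set e1 : Fin (m+2) → ℂ := fun j => if j = i1 then 1 else 0 with he1
  set D : (Fin (m+2) → ℂ) → (Fin (m+2) → ℂ) → ℂ :=
    fun v w => Matrix.det ((N.updateRow i0 v).updateRow i1 w) with hD
  have hswap : ∀ v w, (N.updateRow i0 v).updateRow i1 w
      = (N.updateRow i1 w).updateRow i0 v := by
    intro v w
    ext i j
    by_cases hA : i = i1
    · subst hA
      rw [Matrix.updateRow_self, Matrix.updateRow_ne hne.symm, Matrix.updateRow_self]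
    · rw [Matrix.updateRow_ne hA]
      by_cases hB : i = i0
      · subst hB
        rw [Matrix.updateRow_self, Matrix.updateRow_self]
      · rw [Matrix.updateRow_ne hB, Matrix.updateRow_ne hB, Matrix.updateRow_ne hA]
  -- minor reduction
  have key1 : ∀ v : Fin (m+2) → ℂ, D v e1
      = Matrix.det ((N.updateRow i0 v).submatrix Fin.castSucc Fin.castSucc) := by
    intro v
    show Matrix.det _ = _
    rw [Matrix.det_succ_row _ i1,
      Finset.sum_eq_single_of_mem i1 (Finset.mem_univ i1)
        (fun j _ hj => by
          have hz : ((N.updateRow i0 v).updateRow i1 e1) i1 j = 0 := by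
            rw [Matrix.updateRow_self]; simp [he1, hj]
          rw [hz, mul_zero, zero_mul])]
    have hsub : ((N.updateRow i0 v).updateRow i1 e1).submatrix i1.succAbove i1.succAbove
        = (N.updateRow i0 v).submatrix Fin.castSucc Fin.castSucc := by
      rw [hlast, Fin.succAbove_last]
      ext i j
      rw [Matrix.submatrix_apply, Matrix.submatrix_apply,
        Matrix.updateRow_ne (Fin.castSucc_lt_last i).ne]
    have hone : ((N.updateRow i0 v).updateRow i1 e1) i1 i1 = 1 := by
      rw [Matrix.updateRow_self]; simp [he1]
    have hsign : (-1 : ℂ) ^ ((i1:ℕ) + (i1:ℕ)) = 1 := by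
      have h2 : (i1:ℕ) + (i1:ℕ) = 2 * (m+1) := by omega
      rw [h2, pow_mul]; norm_num
    rw [hsub, hone, hsign]
    ring
  -- linearity
  have hlin2 : ∀ (c d : ℂ) (v w p : Fin (m+2) → ℂ),
      D p (c • v + d • w) = c * D p v + d * D p w := by
    intro c d v w p
    show Matrix.det _ = _
    rw [Matrix.det_updateRow_add, Matrix.det_updateRow_smul, Matrix.det_updateRow_smul]
  have hlin1 : ∀ (c d : ℂ) (v w p : Fin (m+2) → ℂ),
      D (c • v + d • w) p = c * D v p + d * D w p := by
    intro c d v w p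
    show Matrix.det _ = _
    rw [hswap, Matrix.det_updateRow_add, Matrix.det_updateRow_smul, Matrix.det_updateRow_smul,
      ← hswap, ← hswap]
  -- vanishing determinants
  have hz1 : D e1 e1 = 0 := by
    refine Matrix.det_zero_of_row_eq hne ?_
    rw [Matrix.updateRow_ne hne, Matrix.updateRow_self, Matrix.updateRow_self]
  have hzu : D u u = 0 := by
    refine Matrix.det_zero_of_row_eq hne ?_
    rw [Matrix.updateRow_ne hne, Matrix.updateRow_self, Matrix.updateRow_self]
  have hz3 : D e0 u = 0 := by
    refine Matrix.det_eq_zero_of_column_eq_zero i1 ?_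
    intro i
    by_cases hA : i = i1
    · subst hA; rw [Matrix.updateRow_self]; exact h6
    · rw [Matrix.updateRow_ne hA]
      by_cases hB : i = i0
      · subst hB; rw [Matrix.updateRow_self]; simp [he0, hne.symm]
      · rw [Matrix.updateRow_ne hB]
        have hval : (i : ℕ) < m := by
          have := i.isLt
          have h1' : (i:ℕ) ≠ m := fun h => hB (Fin.ext (h.trans hi0.symm))
          have h2' : (i:ℕ) ≠ m+1 := fun h => hA (Fin.ext (h.trans hi1.symm))
          omega
        have : N i i1 = z * (if i = i1 then 1 else 0) - C₁ i i1 := by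
          simp [hN, Matrix.one_apply]
        rw [this, h2 i hval, if_neg hA]
        ring
  have hswapQ : D e1 u = - D u e1 := by
    have hmx : (N.updateRow i0 e1).updateRow i1 u
        = ((N.updateRow i0 u).updateRow i1 e1).submatrix (Equiv.swap i0 i1) id := by
      ext i j
      rw [Matrix.submatrix_apply, id]
      by_cases hA : i = i1
      · subst hA
        rw [Matrix.updateRow_self, Equiv.swap_apply_right, Matrix.updateRow_ne hne,
          Matrix.updateRow_self]
      · rw [Matrix.updateRow_ne hA]
        by_cases hB : i = i0
        · subst hB
          rw [Matrix.updateRow_self, Equiv.swap_apply_left, Matrix.updateRow_self]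
        · rw [Matrix.updateRow_ne hB, Equiv.swap_apply_of_ne_of_ne hB hA,
            Matrix.updateRow_ne hA, Matrix.updateRow_ne hB]
    show Matrix.det _ = _
    rw [hmx, Matrix.det_permute, Equiv.Perm.sign_swap hne]
    simp [hD]
  set P : ℂ := D e0 e1 with hP
  set Q : ℂ := D u e1 with hQ
  -- row identifications
  have hrow0 : N i0 = z • e0 + ((1:ℂ) • ((-(starRingEnd ℂ) a) • u
      + (-(r * (starRingEnd ℂ) b₁)) • e1)) := by
    funext j
    have h3' := h3 j
    simp only [hN, Matrix.sub_apply, Matrix.smul_apply, Matrix.one_apply, smul_eq_mul,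
      Pi.add_apply, Pi.smul_apply, he0, he1] at h3' ⊢
    rw [h3']
    rcases eq_or_ne j i0 with rfl | hj0
    · simp [hne]
      try ring
    · rcases eq_or_ne j i1 with rfl | hj1
      · simp [hj0, Ne.symm hj0]
        try ring
      · simp [hj0, hj1, Ne.symm hj0]
        try ring
  have hrow1 : N i1 = (z + a * (starRingEnd ℂ) b₁) • e1 + (-r) • u := by
    funext j
    have h4' := h4 j
    simp only [hN, Matrix.sub_apply, Matrix.smul_apply, Matrix.one_apply, smul_eq_mul,
      Pi.add_apply, Pi.smul_apply, he1] at h4' ⊢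
    rw [h4']
    rcases eq_or_ne j i1 with rfl | hj1
    · simp
      try ring
    · simp [hj1, Ne.symm hj1]
      try ring
  have hexp : ∀ p, D (N i0) p = z * D e0 p
      + ((-(starRingEnd ℂ) a) * D u p + (-(r * (starRingEnd ℂ) b₁)) * D e1 p) := by
    intro p
    rw [hrow0, hlin1, hlin1, one_mul]
  refine ⟨P, Q, ?_, ?_, ?_⟩
  · -- det of full matrix
    have hdetN : Matrix.det N = D (N i0) (N i1) := by
      show _ = Matrix.det _
      rw [Matrix.updateRow_eq_self N i0, Matrix.updateRow_eq_self N i1]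
    show Matrix.det N = _
    rw [hdetN]
    conv_lhs => rw [hrow1]
    rw [hlin2, hexp, hexp, hz1, hzu, hz3, hswapQ, ← hP, ← hQ]
    linear_combination (-((starRingEnd ℂ) b₁ * Q)) * h7
  · -- C₂
    have hmat2 : z • (1 : Matrix (Fin (m+1)) (Fin (m+1)) ℂ) - C₂
        = (N.updateRow i0 (z • e0 + (-(starRingEnd ℂ) b₂) • u)).submatrix
            Fin.castSucc Fin.castSucc := by
      ext i j
      rw [Matrix.submatrix_apply]
      by_cases hi : (i:ℕ) = m
      · have hieq : i = Fin.last m := Fin.ext (by simpa using hi)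
        have hcs : (i.castSucc : Fin (m+2)) = i0 := Fin.ext (by simp [hi, hi0])
        rw [hcs, Matrix.updateRow_self]
        have hcsj : ((j.castSucc : Fin (m+2)) = i0) ↔ (j = Fin.last m) := by
          rw [Fin.ext_iff, Fin.ext_iff, hi0]; simp
        simp only [Pi.add_apply, Pi.smul_apply, smul_eq_mul, he0, Matrix.sub_apply,
          Matrix.smul_apply, Matrix.one_apply, smul_eq_mul]
        rw [hieq, h5 j]
        by_cases hj : j = Fin.last m
        · subst hj
          rw [if_pos rfl, if_pos (hcsj.mpr rfl)]
          ring
        · rw [if_neg (fun h => hj h.symm), if_neg (fun h => hj (hcsj.mp h))]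
          ring
      · have hlt : (i:ℕ) < m := by have := i.isLt; omega
        have hics : (i.castSucc : Fin (m+2)) ≠ i0 := by
          intro h
          exact hi (by simpa [hi0] using congrArg Fin.val h)
        rw [Matrix.updateRow_ne hics]
        simp only [hN, Matrix.sub_apply, Matrix.smul_apply, Matrix.one_apply, smul_eq_mul]
        rw [h1 i j hlt]
        simp only [Fin.castSucc_inj]
    rw [hmat2, ← key1, hlin1]
    rw [← hP, ← hQ]
    ring
  · -- principal minor
    have hmat3 : z • (1 : Matrix (Fin (m+1)) (Fin (m+1)) ℂ)
        - C₁.submatrix Fin.castSucc Fin.castSucc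
        = (N.updateRow i0 (N i0)).submatrix Fin.castSucc Fin.castSucc := by
      rw [Matrix.updateRow_eq_self]
      ext i j
      simp only [hN, Matrix.submatrix_apply, Matrix.sub_apply, Matrix.smul_apply,
        Matrix.one_apply, smul_eq_mul, Fin.castSucc_inj]
    rw [hmat3, ← key1, hexp, hz1, ← hP, ← hQ]
    ring


-- auxiliary sum lemmas
lemma sum_if_mul {N : ℕ} (k₁ k₂ : Fin N) (h : k₁ ≠ k₂) (A B : ℂ) (f : Fin N → ℂ) :
    ∑ k, (if k = k₁ then A else if k = k₂ then B else 0) * f k = A * f k₁ + B * f k₂ := by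
  have key : ∀ k : Fin N, (if k = k₁ then A else if k = k₂ then B else 0) * f k
      = (if k = k₁ then A * f k₁ else 0) + (if k = k₂ then B * f k₂ else 0) := by
    intro k
    by_cases h1 : k = k₁
    · subst h1; simp [h]
    · by_cases h2 : k = k₂
      · subst h2; simp [h1]
      · simp [h1, h2]
  rw [Finset.sum_congr rfl fun k _ => key k, Finset.sum_add_distrib]
  simp

lemma sum_mul_if {N : ℕ} (k₁ k₂ : Fin N) (h : k₁ ≠ k₂) (A B : ℂ) (f : Fin N → ℂ) :
    ∑ k, f k * (if k = k₁ then A else if k = k₂ then B else 0) = f k₁ * A + f k₂ * B := by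
  have key : ∀ k : Fin N, f k * (if k = k₁ then A else if k = k₂ then B else 0)
      = (if k = k₁ then f k₁ * A else 0) + (if k = k₂ then f k₂ * B else 0) := by
    intro k
    by_cases h1 : k = k₁
    · subst h1; simp [h]
    · by_cases h2 : k = k₂
      · subst h2; simp [h1]
      · simp [h1, h2]
  rw [Finset.sum_congr rfl fun k _ => key k, Finset.sum_add_distrib]
  simp

lemma sum_if_mul_single {N : ℕ} (k₁ : Fin N) (A : ℂ) (f : Fin N → ℂ) :
    ∑ k, (if k = k₁ then A else 0) * f k = A * f k₁ := by
  have key : ∀ k : Fin N, (if k = k₁ then A else 0) * f k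
      = (if k = k₁ then A * f k₁ else 0) := by
    intro k
    by_cases h1 : k = k₁
    · subst h1; simp
    · simp [h1]
  rw [Finset.sum_congr rfl fun k _ => key k]
  simp

lemma sum_mul_if_single {N : ℕ} (k₁ : Fin N) (A : ℂ) (f : Fin N → ℂ) :
    ∑ k, f k * (if k = k₁ then A else 0) = f k₁ * A := by
  have key : ∀ k : Fin N, f k * (if k = k₁ then A else 0)
      = (if k = k₁ then f k₁ * A else 0) := by
    intro k
    by_cases h1 : k = k₁
    · subst h1; simp
    · simp [h1]
  rw [Finset.sum_congr rfl fun k _ => key k]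
  simp

-- entry lemmas, even case
lemma LrowE (m : ℕ) (hm : Even m) (α : ℕ → ℂ) (β : ℂ)
    (i0 i1 : Fin (m+2)) (h0 : (i0:ℕ) = m) (h1 : (i1:ℕ) = m+1) (k : Fin (m+2)) :
    cmvL (m+2) α β i0 k = if k = i0 then (starRingEnd ℂ) (α m)
      else if k = i1 then ((rhoC (α m) : ℝ) : ℂ) else 0 := by
  have hm' : m % 2 = 0 := Nat.even_iff.mp hm
  simp only [cmvL, Matrix.of_apply, Fin.ext_iff, Nat.even_iff, Nat.odd_iff, h0, h1]
  split_ifs <;>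
    first | rfl | omega | contradiction | (congr 1 <;> omega) | (congr 2 <;> omega) | (congr 3 <;> omega)

lemma LrowE1 (m : ℕ) (hm : Even m) (α : ℕ → ℂ) (β : ℂ)
    (i0 i1 : Fin (m+2)) (h0 : (i0:ℕ) = m) (h1 : (i1:ℕ) = m+1) (k : Fin (m+2)) :
    cmvL (m+2) α β i1 k = if k = i0 then ((rhoC (α m) : ℝ) : ℂ)
      else if k = i1 then -α m else 0 := by
  have hm' : m % 2 = 0 := Nat.even_iff.mp hm
  simp only [cmvL, Matrix.of_apply, Fin.ext_iff, Nat.even_iff, Nat.odd_iff, h0, h1,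
    Nat.add_sub_cancel]
  split_ifs <;>
    first | rfl | omega | contradiction | (congr 1 <;> omega) | (congr 2 <;> omega) | (congr 3 <;> omega)

lemma MrowE1 (m : ℕ) (hm : Even m) (α : ℕ → ℂ) (β : ℂ)
    (i1 : Fin (m+2)) (h1 : (i1:ℕ) = m+1) (k : Fin (m+2)) :
    cmvM (m+2) α β i1 k = if k = i1 then (starRingEnd ℂ) β else 0 := by
  have hm' : m % 2 = 0 := Nat.even_iff.mp hm
  simp only [cmvM, Matrix.of_apply, Fin.ext_iff, Nat.even_iff, Nat.odd_iff, h1]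
  split_ifs <;>
    first | rfl | omega | contradiction | (congr 1 <;> omega) | (congr 2 <;> omega) | (congr 3 <;> omega)

lemma McolE (m : ℕ) (hm : Even m) (α : ℕ → ℂ) (β : ℂ)
    (i1 : Fin (m+2)) (h1 : (i1:ℕ) = m+1) (k : Fin (m+2)) (hk : (k:ℕ) ≠ m+1) :
    cmvM (m+2) α β k i1 = 0 := by
  have hm' : m % 2 = 0 := Nat.even_iff.mp hm
  simp only [cmvM, Matrix.of_apply, Fin.ext_iff, Nat.even_iff, Nat.odd_iff, h1]
  split_ifs <;>
    first | rfl | omega | contradiction | (congr 1 <;> omega) | (congr 2 <;> omega) | (congr 3 <;> omega)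

lemma LcolLt (m : ℕ) (α : ℕ → ℂ) (β : ℂ)
    (i i1 : Fin (m+2)) (h1 : (i1:ℕ) = m+1) (hi : (i:ℕ) < m) :
    cmvL (m+2) α β i i1 = 0 := by
  simp only [cmvL, Matrix.of_apply, Fin.ext_iff, Nat.even_iff, Nat.odd_iff, h1]
  split_ifs <;>
    first | rfl | omega | contradiction | (congr 1 <;> omega) | (congr 2 <;> omega) | (congr 3 <;> omega)

lemma claimA (m : ℕ) (α : ℕ → ℂ) (β' β : ℂ) (i k : Fin (m+1)) (hi : (i:ℕ) < m) :
    cmvL (m+1) α β' i k = cmvL (m+2) α β i.castSucc k.castSucc := by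
  simp only [cmvL, Matrix.of_apply, Fin.ext_iff, Nat.even_iff, Nat.odd_iff,
    Fin.coe_castSucc, Nat.add_sub_cancel, show m+2-1 = m+1 from rfl]
  split_ifs <;>
    first | rfl | omega | contradiction | (congr 1 <;> omega) | (congr 2 <;> omega) | (congr 3 <;> omega)

lemma claimB (m : ℕ) (hm : Even m) (α : ℕ → ℂ) (β' β : ℂ) (k j : Fin (m+1)) :
    cmvM (m+1) α β' k j = cmvM (m+2) α β k.castSucc j.castSucc := by
  have hm' : m % 2 = 0 := Nat.even_iff.mp hm
  simp only [cmvM, Matrix.of_apply, Fin.ext_iff, Nat.even_iff, Nat.odd_iff,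
    Fin.coe_castSucc, Nat.add_sub_cancel, show m+2-1 = m+1 from rfl]
  split_ifs <;>
    first | rfl | omega | contradiction | (congr 1 <;> omega) | (congr 2 <;> omega) | (congr 3 <;> omega)

lemma L2lastE (m : ℕ) (hm : Even m) (α : ℕ → ℂ) (β' : ℂ) (k : Fin (m+1)) :
    cmvL (m+1) α β' (Fin.last m) k
      = if k = Fin.last m then (starRingEnd ℂ) β' else 0 := by
  have hm' : m % 2 = 0 := Nat.even_iff.mp hm
  simp only [cmvL, Matrix.of_apply, Fin.ext_iff, Nat.even_iff, Nat.odd_iff, Fin.val_last,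
    Nat.add_sub_cancel]
  split_ifs <;>
    first | rfl | omega | contradiction | (congr 1 <;> omega) | (congr 2 <;> omega) | (congr 3 <;> omega)

-- entry lemmas, odd case
lemma McolO0 (m : ℕ) (hm : Odd m) (α : ℕ → ℂ) (β : ℂ)
    (i0 i1 : Fin (m+2)) (h0 : (i0:ℕ) = m) (h1 : (i1:ℕ) = m+1) (k : Fin (m+2)) :
    cmvM (m+2) α β k i0 = if k = i0 then (starRingEnd ℂ) (α m)
      else if k = i1 then ((rhoC (α m) : ℝ) : ℂ) else 0 := by
  have hm' : m % 2 = 1 := Nat.odd_iff.mp hm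
  simp only [cmvM, Matrix.of_apply, Fin.ext_iff, Nat.even_iff, Nat.odd_iff, h0, h1,
    show m+2-1 = m+1 from rfl]
  split_ifs <;>
    first | rfl | omega | contradiction | (congr 1 <;> omega) | (congr 2 <;> omega) | (congr 3 <;> omega)

lemma McolO1 (m : ℕ) (hm : Odd m) (α : ℕ → ℂ) (β : ℂ)
    (i0 i1 : Fin (m+2)) (h0 : (i0:ℕ) = m) (h1 : (i1:ℕ) = m+1) (k : Fin (m+2)) :
    cmvM (m+2) α β k i1 = if k = i0 then ((rhoC (α m) : ℝ) : ℂ)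
      else if k = i1 then -α m else 0 := by
  have hm' : m % 2 = 1 := Nat.odd_iff.mp hm
  simp only [cmvM, Matrix.of_apply, Fin.ext_iff, Nat.even_iff, Nat.odd_iff, h0, h1,
    Nat.add_sub_cancel, show m+2-1 = m+1 from rfl]
  split_ifs <;>
    first | rfl | omega | contradiction | (congr 1 <;> omega) | (congr 2 <;> omega) | (congr 3 <;> omega)

lemma LcolO (m : ℕ) (hm : Odd m) (α : ℕ → ℂ) (β : ℂ)
    (i1 : Fin (m+2)) (h1 : (i1:ℕ) = m+1) (i : Fin (m+2)) :
    cmvL (m+2) α β i i1 = if i = i1 then (starRingEnd ℂ) β else 0 := by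
  have hm' : m % 2 = 1 := Nat.odd_iff.mp hm
  simp only [cmvL, Matrix.of_apply, Fin.ext_iff, Nat.even_iff, Nat.odd_iff, h1,
    show m+2-1 = m+1 from rfl]
  split_ifs <;>
    first | rfl | omega | contradiction | (congr 1 <;> omega) | (congr 2 <;> omega) | (congr 3 <;> omega)

lemma LrowO (m : ℕ) (hm : Odd m) (α : ℕ → ℂ) (β : ℂ)
    (i1 : Fin (m+2)) (h1 : (i1:ℕ) = m+1) (k : Fin (m+2)) :
    cmvL (m+2) α β i1 k = if k = i1 then (starRingEnd ℂ) β else 0 := by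
  have hm' : m % 2 = 1 := Nat.odd_iff.mp hm
  simp only [cmvL, Matrix.of_apply, Fin.ext_iff, Nat.even_iff, Nat.odd_iff, h1,
    show m+2-1 = m+1 from rfl]
  split_ifs <;>
    first | rfl | omega | contradiction | (congr 1 <;> omega) | (congr 2 <;> omega) | (congr 3 <;> omega)

lemma MrowOlt (m : ℕ) (hm : Odd m) (α : ℕ → ℂ) (β : ℂ)
    (i1 : Fin (m+2)) (h1 : (i1:ℕ) = m+1) (i : Fin (m+2)) (hi : (i:ℕ) < m) :
    cmvM (m+2) α β i1 i = 0 := by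
  have hm' : m % 2 = 1 := Nat.odd_iff.mp hm
  simp only [cmvM, Matrix.of_apply, Fin.ext_iff, Nat.even_iff, Nat.odd_iff, h1,
    show m+2-1 = m+1 from rfl]
  split_ifs <;>
    first | rfl | omega | contradiction | (congr 1 <;> omega) | (congr 2 <;> omega) | (congr 3 <;> omega)

lemma claimA' (m : ℕ) (hm : Odd m) (α : ℕ → ℂ) (β' β : ℂ) (j k : Fin (m+1)) :
    cmvL (m+1) α β' j k = cmvL (m+2) α β j.castSucc k.castSucc := by
  have hm' : m % 2 = 1 := Nat.odd_iff.mp hm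
  simp only [cmvL, Matrix.of_apply, Fin.ext_iff, Nat.even_iff, Nat.odd_iff,
    Fin.coe_castSucc, Nat.add_sub_cancel, show m+2-1 = m+1 from rfl]
  split_ifs <;>
    first | rfl | omega | contradiction | (congr 1 <;> omega) | (congr 2 <;> omega) | (congr 3 <;> omega)

lemma claimB' (m : ℕ) (hm : Odd m) (α : ℕ → ℂ) (β' β : ℂ) (k i : Fin (m+1))
    (hi : (i:ℕ) < m) :
    cmvM (m+1) α β' k i = cmvM (m+2) α β k.castSucc i.castSucc := by
  have hm' : m % 2 = 1 := Nat.odd_iff.mp hm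
  simp only [cmvM, Matrix.of_apply, Fin.ext_iff, Nat.even_iff, Nat.odd_iff,
    Fin.coe_castSucc, Nat.add_sub_cancel, show m+2-1 = m+1 from rfl]
  split_ifs <;>
    first | rfl | omega | contradiction | (congr 1 <;> omega) | (congr 2 <;> omega) | (congr 3 <;> omega)

lemma McolO2 (m : ℕ) (hm : Odd m) (α : ℕ → ℂ) (β' : ℂ) (k : Fin (m+1)) :
    cmvM (m+1) α β' k (Fin.last m)
      = if k = Fin.last m then (starRingEnd ℂ) β' else 0 := by
  have hm' : m % 2 = 1 := Nat.odd_iff.mp hm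
  simp only [cmvM, Matrix.of_apply, Fin.ext_iff, Nat.even_iff, Nat.odd_iff, Fin.val_last,
    Nat.add_sub_cancel]
  split_ifs <;>
    first | rfl | omega | contradiction | (congr 1 <;> omega) | (congr 2 <;> omega) | (congr 3 <;> omega)

-- product lemmas, even case
lemma prodE3 (m : ℕ) (hm : Even m) (α : ℕ → ℂ) (β : ℂ)
    (i0 i1 : Fin (m+2)) (h0 : (i0:ℕ) = m) (h1 : (i1:ℕ) = m+1) (j : Fin (m+2)) :
    CMVmat (m+2) α β i0 j
      = (starRingEnd ℂ) (α m) * cmvM (m+2) α β i0 j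
        + ((rhoC (α m) : ℝ) : ℂ) * (starRingEnd ℂ) β * (if j = i1 then 1 else 0) := by
  have hne : i0 ≠ i1 := fun h => by
    have := congrArg Fin.val h; omega
  rw [CMVmat, Matrix.mul_apply]
  simp only [LrowE m hm α β i0 i1 h0 h1]
  rw [sum_if_mul i0 i1 hne, MrowE1 m hm α β i1 h1 j]
  by_cases hj : j = i1 <;> simp [hj] <;> ring

lemma prodE4 (m : ℕ) (hm : Even m) (α : ℕ → ℂ) (β : ℂ)
    (i0 i1 : Fin (m+2)) (h0 : (i0:ℕ) = m) (h1 : (i1:ℕ) = m+1) (j : Fin (m+2)) :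
    CMVmat (m+2) α β i1 j
      = ((rhoC (α m) : ℝ) : ℂ) * cmvM (m+2) α β i0 j
        - α m * (starRingEnd ℂ) β * (if j = i1 then 1 else 0) := by
  have hne : i0 ≠ i1 := fun h => by
    have := congrArg Fin.val h; omega
  rw [CMVmat, Matrix.mul_apply]
  simp only [LrowE1 m hm α β i0 i1 h0 h1]
  rw [sum_if_mul i0 i1 hne, MrowE1 m hm α β i1 h1 j]
  by_cases hj : j = i1 <;> simp [hj] <;> ring

lemma prodE2 (m : ℕ) (hm : Even m) (α : ℕ → ℂ) (β : ℂ)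
    (i i1 : Fin (m+2)) (h1 : (i1:ℕ) = m+1) (hi : (i:ℕ) < m) :
    CMVmat (m+2) α β i i1 = 0 := by
  rw [CMVmat, Matrix.mul_apply]
  refine Finset.sum_eq_zero fun k _ => ?_
  by_cases hk : (k:ℕ) = m+1
  · have hk' : k = i1 := Fin.ext (by omega)
    rw [hk', LcolLt m α β i i1 h1 hi, zero_mul]
  · rw [McolE m hm α β i1 h1 k hk, mul_zero]

lemma prodE1 (m : ℕ) (hm : Even m) (α : ℕ → ℂ) (β' β : ℂ) (i j : Fin (m+1))
    (hi : (i:ℕ) < m) :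
    CMVmat (m+1) α β' i j = CMVmat (m+2) α β i.castSucc j.castSucc := by
  rw [CMVmat, CMVmat, Matrix.mul_apply, Matrix.mul_apply]
  conv_rhs => rw [Fin.sum_univ_castSucc]
  have hlast : cmvL (m+2) α β i.castSucc (Fin.last (m+1)) = 0 :=
    LcolLt m α β i.castSucc (Fin.last (m+1)) (by simp) (by simpa using hi)
  rw [hlast, zero_mul, add_zero]
  exact Finset.sum_congr rfl fun k _ => by
    rw [claimA m α β' β i k hi, claimB m hm α β' β k j]

lemma prodE5 (m : ℕ) (hm : Even m) (α : ℕ → ℂ) (β' β : ℂ) (j : Fin (m+1))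
    (i0 : Fin (m+2)) (h0 : (i0:ℕ) = m) :
    CMVmat (m+1) α β' (Fin.last m) j
      = (starRingEnd ℂ) β' * cmvM (m+2) α β i0 j.castSucc := by
  rw [CMVmat, Matrix.mul_apply]
  simp only [L2lastE m hm α β']
  rw [sum_if_mul_single (Fin.last m), claimB m hm α β' β (Fin.last m) j]
  have hc : (Fin.last m).castSucc = i0 := Fin.ext (by simp [h0])
  rw [hc]

-- product lemmas, odd case
lemma prodO3 (m : ℕ) (hm : Odd m) (α : ℕ → ℂ) (β : ℂ)
    (i0 i1 : Fin (m+2)) (h0 : (i0:ℕ) = m) (h1 : (i1:ℕ) = m+1) (j : Fin (m+2)) :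
    CMVmat (m+2) α β j i0
      = (starRingEnd ℂ) (α m) * cmvL (m+2) α β j i0
        + ((rhoC (α m) : ℝ) : ℂ) * (starRingEnd ℂ) β * (if j = i1 then 1 else 0) := by
  have hne : i0 ≠ i1 := fun h => by
    have := congrArg Fin.val h; omega
  rw [CMVmat, Matrix.mul_apply]
  simp only [McolO0 m hm α β i0 i1 h0 h1]
  rw [sum_mul_if i0 i1 hne, LcolO m hm α β i1 h1 j]
  by_cases hj : j = i1 <;> simp [hj] <;> ring

lemma prodO4 (m : ℕ) (hm : Odd m) (α : ℕ → ℂ) (β : ℂ)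
    (i0 i1 : Fin (m+2)) (h0 : (i0:ℕ) = m) (h1 : (i1:ℕ) = m+1) (j : Fin (m+2)) :
    CMVmat (m+2) α β j i1
      = ((rhoC (α m) : ℝ) : ℂ) * cmvL (m+2) α β j i0
        - α m * (starRingEnd ℂ) β * (if j = i1 then 1 else 0) := by
  have hne : i0 ≠ i1 := fun h => by
    have := congrArg Fin.val h; omega
  rw [CMVmat, Matrix.mul_apply]
  simp only [McolO1 m hm α β i0 i1 h0 h1]
  rw [sum_mul_if i0 i1 hne, LcolO m hm α β i1 h1 j]
  by_cases hj : j = i1 <;> simp [hj] <;> ring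

lemma prodO2 (m : ℕ) (hm : Odd m) (α : ℕ → ℂ) (β : ℂ)
    (i i1 : Fin (m+2)) (h1 : (i1:ℕ) = m+1) (hi : (i:ℕ) < m) :
    CMVmat (m+2) α β i1 i = 0 := by
  rw [CMVmat, Matrix.mul_apply]
  simp only [LrowO m hm α β i1 h1]
  rw [sum_if_mul_single i1, MrowOlt m hm α β i1 h1 i hi, mul_zero]

lemma prodO1 (m : ℕ) (hm : Odd m) (α : ℕ → ℂ) (β' β : ℂ) (j i : Fin (m+1))
    (hi : (i:ℕ) < m) :
    CMVmat (m+1) α β' j i = CMVmat (m+2) α β j.castSucc i.castSucc := by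
  rw [CMVmat, CMVmat, Matrix.mul_apply, Matrix.mul_apply]
  conv_rhs => rw [Fin.sum_univ_castSucc]
  have hlast : cmvM (m+2) α β (Fin.last (m+1)) i.castSucc = 0 :=
    MrowOlt m hm α β (Fin.last (m+1)) (by simp) i.castSucc (by simpa using hi)
  rw [hlast, mul_zero, add_zero]
  exact Finset.sum_congr rfl fun k _ => by
    rw [claimA' m hm α β' β j k, claimB' m hm α β' β k i hi]

lemma prodO5 (m : ℕ) (hm : Odd m) (α : ℕ → ℂ) (β' β : ℂ) (j : Fin (m+1))
    (i0 : Fin (m+2)) (h0 : (i0:ℕ) = m) :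
    CMVmat (m+1) α β' j (Fin.last m)
      = (starRingEnd ℂ) β' * cmvL (m+2) α β j.castSucc i0 := by
  rw [CMVmat, Matrix.mul_apply]
  simp only [McolO2 m hm α β']
  rw [sum_mul_if_single (Fin.last m), claimA' m hm α β' β j (Fin.last m)]
  have hc : (Fin.last m).castSucc = i0 := Fin.ext (by simp [h0])
  rw [hc, mul_comm]



lemma leadPrincipal_eq (m : ℕ) (M : Matrix (Fin (m+2)) (Fin (m+2)) ℂ) :
    leadPrincipal M (m+1) = M.submatrix Fin.castSucc Fin.castSucc := by
  ext i j
  have hi : (i:ℕ) < m+2 := Nat.lt_succ_of_lt i.isLt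
  have hj : (j:ℕ) < m+2 := Nat.lt_succ_of_lt j.isLt
  simp only [leadPrincipal, Matrix.of_apply, dif_pos hi, dif_pos hj, Matrix.submatrix_apply]
  rw [show (⟨(i:ℕ), hi⟩ : Fin (m+2)) = i.castSucc from Fin.ext rfl,
    show (⟨(j:ℕ), hj⟩ : Fin (m+2)) = j.castSucc from Fin.ext rfl]

lemma final_algebra (a b₁ b₂ z P Q : ℂ) (ha : ‖a‖ < 1)
    (hb1 : ‖b₁‖ = 1) (hb2 : ‖b₂‖ = 1) :
    ((z + a * (starRingEnd ℂ) b₁) * (z * P - (starRingEnd ℂ) a * Q)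
        - (1 - (starRingEnd ℂ) a * a) * ((starRingEnd ℂ) b₁ * Q))
      - ((starRingEnd ℂ) b₁ * ((1 - ‖a‖ ^ 2 : ℝ) : ℂ)
          / ((starRingEnd ℂ) b₂ - (starRingEnd ℂ) a)) * (z * P - (starRingEnd ℂ) b₂ * Q)
    = (z - (starRingEnd ℂ) b₁ * b₂ * (1 - (starRingEnd ℂ) b₂ * a)
          / (1 - b₂ * (starRingEnd ℂ) a)) * (z * P - (starRingEnd ℂ) a * Q) := by
  have h2u : b₂ * (starRingEnd ℂ) b₂ = 1 := by
    rw [Complex.mul_conj, Complex.normSq_eq_norm_sq, hb2]; norm_num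
  have hofr : ((1 - ‖a‖ ^ 2 : ℝ) : ℂ) = 1 - (starRingEnd ℂ) a * a := by
    rw [← Complex.normSq_eq_norm_sq, Complex.ofReal_sub, Complex.ofReal_one, ← Complex.mul_conj]
    ring
  have hd1 : (starRingEnd ℂ) b₂ - (starRingEnd ℂ) a ≠ 0 := by
    intro h
    have h' : (starRingEnd ℂ) b₂ = (starRingEnd ℂ) a := sub_eq_zero.mp h
    have hba : b₂ = a := (starRingEnd ℂ).injective h'
    rw [hba] at hb2; linarith
  have hd2 : 1 - b₂ * (starRingEnd ℂ) a ≠ 0 := by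
    intro h
    have h' : b₂ * (starRingEnd ℂ) a = 1 := by linear_combination -h
    have habs := congrArg (‖·‖) h'
    rw [norm_mul, hb2, one_mul, Complex.norm_conj, norm_one] at habs
    linarith
  rw [hofr]
  field_simp
  have hX : (1 - (starRingEnd ℂ) a * b₂) * (1 - (starRingEnd ℂ) a * b₂)⁻¹ = 1 :=
    mul_inv_cancel₀ (by rwa [mul_comm] at hd2)
  linear_combination (-(z*a*(starRingEnd ℂ) b₁*P*(starRingEnd ℂ) b₂) + z*(starRingEnd ℂ) b₁*P
    + a*(starRingEnd ℂ) b₁*(starRingEnd ℂ) a*Q*(starRingEnd ℂ) b₂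
    - (starRingEnd ℂ) b₁*(starRingEnd ℂ) a*Q) * h2u
    + (z*(starRingEnd ℂ) b₁*P - (starRingEnd ℂ) b₁*(starRingEnd ℂ) a*Q)
      * (1 - a*(starRingEnd ℂ) b₂) * hX
    + (z*(starRingEnd ℂ) b₁*P - (starRingEnd ℂ) b₁*(starRingEnd ℂ) a*Q)
      * (1 - a*(starRingEnd ℂ) b₂) * ((1 - (starRingEnd ℂ) a * b₂)⁻¹ - 1) * h2u

/-- formula (3.8): with
`A = conj(β₁) ρ_{n-2}² / (conj(β₂) − conj(α_{n-2})) ≠ 0` and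
`B = conj(β₁) β₂ (1 − conj(β₂) α_{n-2}) / (1 − β₂ conj(α_{n-2}))`, `|B| = 1`, one has
`Φ̃_n(z) − A Φ̃_{n-1}(z) = (z − B) Φ_{n-1}(z)`. -/
theorem relation_three_eight (n : ℕ) (hn : 2 ≤ n)
    (α : ℕ → ℂ) (hα : ∀ j, j < n - 1 → ‖α j‖ < 1)
    (β₁ β₂ : ℂ) (hβ₁ : ‖β₁‖ = 1) (hβ₂ : ‖β₂‖ = 1) :
    let A : ℂ := (starRingEnd ℂ) β₁ * ((1 - ‖α (n - 2)‖ ^ 2 : ℝ) : ℂ) /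
      ((starRingEnd ℂ) β₂ - (starRingEnd ℂ) (α (n - 2)))
    let B : ℂ := (starRingEnd ℂ) β₁ * β₂ * (1 - (starRingEnd ℂ) β₂ * α (n - 2)) /
      (1 - β₂ * (starRingEnd ℂ) (α (n - 2)))
    A ≠ 0 ∧ ‖B‖ = 1 ∧
    ∀ z : ℂ,
      (Matrix.charpoly (CMVmat n α β₁)).eval z -
          A * (Matrix.charpoly (CMVmat (n - 1) α β₂)).eval z =
        (z - B) * (PhiPoly n α β₁ (n - 1)).eval z := by
  obtain ⟨m, rfl⟩ : ∃ m, n = m + 2 := ⟨n - 2, by omega⟩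
  intro A B
  have hα' : ‖α m‖ < 1 := hα m (by omega)
  have hA : A = (starRingEnd ℂ) β₁ * ((1 - ‖α m‖ ^ 2 : ℝ) : ℂ) /
      ((starRingEnd ℂ) β₂ - (starRingEnd ℂ) (α m)) := rfl
  have hB : B = (starRingEnd ℂ) β₁ * β₂ * (1 - (starRingEnd ℂ) β₂ * α m) /
      (1 - β₂ * (starRingEnd ℂ) (α m)) := rfl
  have hd1 : (starRingEnd ℂ) β₂ - (starRingEnd ℂ) (α m) ≠ 0 := by
    intro h
    have h' : (starRingEnd ℂ) β₂ = (starRingEnd ℂ) (α m) := sub_eq_zero.mp h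
    have hba : β₂ = α m := (starRingEnd ℂ).injective h'
    rw [hba] at hβ₂; linarith
  have hd2 : 1 - β₂ * (starRingEnd ℂ) (α m) ≠ 0 := by
    intro h
    have h' : β₂ * (starRingEnd ℂ) (α m) = 1 := by linear_combination -h
    have habs := congrArg (‖·‖) h'
    rw [norm_mul, hβ₂, one_mul, Complex.norm_conj, norm_one] at habs
    linarith
  refine ⟨?_, ?_, ?_⟩
  · rw [hA]
    apply div_ne_zero _ hd1
    apply mul_ne_zero
    · intro h
      have : β₁ = 0 := by simpa using congrArg (starRingEnd ℂ) h
      rw [this] at hβ₁; simp at hβ₁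
    · rw [ne_eq, Complex.ofReal_eq_zero]
      nlinarith [norm_nonneg (α m)]
  · rw [hB, norm_div, norm_mul, norm_mul, Complex.norm_conj, hβ₁, hβ₂, one_mul, one_mul]
    have hcnj : ‖1 - (starRingEnd ℂ) β₂ * α m‖
        = ‖1 - β₂ * (starRingEnd ℂ) (α m)‖ := by
      rw [← Complex.norm_conj (1 - β₂ * (starRingEnd ℂ) (α m))]
      congr 1
      simp [_root_.map_sub, _root_.map_mul]
    rw [hcnj, div_self ((norm_pos_iff.mpr hd2).ne')]
  · intro z
    show (Matrix.charpoly (CMVmat (m+2) α β₁)).eval z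
        - A * (Matrix.charpoly (CMVmat (m+1) α β₂)).eval z
      = (z - B) * (Matrix.charpoly (leadPrincipal (CMVmat (m+2) α β₁) (m+1))).eval z
    rw [eval_charpoly', eval_charpoly', eval_charpoly', leadPrincipal_eq]
    have h7 : ((rhoC (α m) : ℝ) : ℂ) * ((rhoC (α m) : ℝ) : ℂ)
        = 1 - (starRingEnd ℂ) (α m) * α m := by
      rw [← Complex.ofReal_mul]
      rw [show rhoC (α m) * rhoC (α m) = 1 - ‖α m‖^2 from
        Real.mul_self_sqrt (by nlinarith [norm_nonneg (α m)])]
      rw [← Complex.normSq_eq_norm_sq, Complex.ofReal_sub, Complex.ofReal_one, ← Complex.mul_conj]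
      ring
    rcases Nat.even_or_odd m with hm | hm
    · obtain ⟨P, Q, hC1, hC2, hCp⟩ :=
        core m (CMVmat (m+2) α β₁) (CMVmat (m+1) α β₂)
          (fun j => cmvM (m+2) α β₁ ⟨m, by omega⟩ j) (α m) β₁ β₂ ((rhoC (α m) : ℝ) : ℂ)
          ⟨m, by omega⟩ ⟨m+1, by omega⟩ rfl rfl
          (fun i j hi => prodE1 m hm α β₂ β₁ i j hi)
          (fun i hi => prodE2 m hm α β₁ i ⟨m+1, by omega⟩ rfl hi)
          (fun j => prodE3 m hm α β₁ ⟨m, by omega⟩ ⟨m+1, by omega⟩ rfl rfl j)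
          (fun j => prodE4 m hm α β₁ ⟨m, by omega⟩ ⟨m+1, by omega⟩ rfl rfl j)
          (fun j => prodE5 m hm α β₂ β₁ j ⟨m, by omega⟩ rfl)
          (McolE m hm α β₁ ⟨m+1, by omega⟩ rfl ⟨m, by omega⟩ (by simp))
          h7 z
      rw [hC1, hC2, hCp, hA, hB]
      linear_combination final_algebra (α m) β₁ β₂ z P Q hα' hβ₁ hβ₂
    · obtain ⟨P, Q, hC1, hC2, hCp⟩ :=
        core m (CMVmat (m+2) α β₁)ᵀ (CMVmat (m+1) α β₂)ᵀ
          (fun i => cmvL (m+2) α β₁ i ⟨m, by omega⟩) (α m) β₁ β₂ ((rhoC (α m) : ℝ) : ℂ)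
          ⟨m, by omega⟩ ⟨m+1, by omega⟩ rfl rfl
          (fun i j hi => prodO1 m hm α β₂ β₁ j i hi)
          (fun i hi => prodO2 m hm α β₁ i ⟨m+1, by omega⟩ rfl hi)
          (fun j => prodO3 m hm α β₁ ⟨m, by omega⟩ ⟨m+1, by omega⟩ rfl rfl j)
          (fun j => prodO4 m hm α β₁ ⟨m, by omega⟩ ⟨m+1, by omega⟩ rfl rfl j)
          (fun j => prodO5 m hm α β₂ β₁ j ⟨m, by omega⟩ rfl)
          (by
            show cmvL (m+2) α β₁ ⟨m+1, by omega⟩ ⟨m, by omega⟩ = 0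
            rw [LrowO m hm α β₁ ⟨m+1, by omega⟩ rfl ⟨m, by omega⟩]
            exact if_neg (fun h => by have := congrArg Fin.val h; simp at this))
          h7 z
      have t1 : Matrix.det (z • (1 : Matrix (Fin (m+2)) (Fin (m+2)) ℂ)
            - (CMVmat (m+2) α β₁)ᵀ)
          = Matrix.det (z • 1 - CMVmat (m+2) α β₁) := by
        rw [show z • (1 : Matrix (Fin (m+2)) (Fin (m+2)) ℂ) - (CMVmat (m+2) α β₁)ᵀ
            = (z • 1 - CMVmat (m+2) α β₁)ᵀ by
          rw [Matrix.transpose_sub, Matrix.transpose_smul, Matrix.transpose_one],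
          Matrix.det_transpose]
      have t2 : Matrix.det (z • (1 : Matrix (Fin (m+1)) (Fin (m+1)) ℂ)
            - (CMVmat (m+1) α β₂)ᵀ)
          = Matrix.det (z • 1 - CMVmat (m+1) α β₂) := by
        rw [show z • (1 : Matrix (Fin (m+1)) (Fin (m+1)) ℂ) - (CMVmat (m+1) α β₂)ᵀ
            = (z • 1 - CMVmat (m+1) α β₂)ᵀ by
          rw [Matrix.transpose_sub, Matrix.transpose_smul, Matrix.transpose_one],
          Matrix.det_transpose]
      have t3 : Matrix.det (z • (1 : Matrix (Fin (m+1)) (Fin (m+1)) ℂ)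
            - ((CMVmat (m+2) α β₁)ᵀ).submatrix Fin.castSucc Fin.castSucc)
          = Matrix.det (z • 1
            - (CMVmat (m+2) α β₁).submatrix Fin.castSucc Fin.castSucc) := by
        rw [show ((CMVmat (m+2) α β₁)ᵀ).submatrix Fin.castSucc Fin.castSucc
            = ((CMVmat (m+2) α β₁).submatrix Fin.castSucc Fin.castSucc)ᵀ from
          (Matrix.transpose_submatrix _ _ _).symm]
        rw [show z • (1 : Matrix (Fin (m+1)) (Fin (m+1)) ℂ)
            - ((CMVmat (m+2) α β₁).submatrix Fin.castSucc Fin.castSucc)ᵀ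
            = (z • 1 - (CMVmat (m+2) α β₁).submatrix Fin.castSucc Fin.castSucc)ᵀ by
          rw [Matrix.transpose_sub, Matrix.transpose_smul, Matrix.transpose_one],
          Matrix.det_transpose]
      rw [← t1, ← t2, ← t3, hC1, hC2, hCp, hA, hB]
      linear_combination final_algebra (α m) β₁ β₂ z P Q hα' hβ₁ hβ₂


end CMVPaper
end
end

section
/- Let z₁,…,z_{n-1}, z₀ be n pairwise distinct points on the unit circle 𝕋 (n ≥ 2), and let π be a complex polynomial of degree at most n−1 such that π(z_k) = 0 for k = 1,…,n−1 and π'(z₀) = 0. Then π is identically zero. -/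
open Complex Polynomial Matrix BigOperators Finset

noncomputable section

namespace CMVPaper

lemma re_half (a b : ℂ) (ha : ‖a‖ = 1) (hb : ‖b‖ = 1) (hab : a ≠ b) :
    (a / (a - b)).re = 1/2 := by
  have hd : a - b ≠ 0 := sub_ne_zero.2 hab
  have hna : a.re^2 + a.im^2 = 1 := by
    have := Complex.sq_norm a; rw [ha] at this
    simpa [Complex.normSq_apply, sq, eq_comm] using this
  have hnb : b.re^2 + b.im^2 = 1 := by
    have := Complex.sq_norm b; rw [hb] at this
    simpa [Complex.normSq_apply, sq, eq_comm] using this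
  have hns : Complex.normSq (a - b) ≠ 0 := by simpa using hd
  rw [Complex.div_re, ← add_div, div_eq_iff hns]
  simp only [Complex.normSq_apply, Complex.sub_re, Complex.sub_im]
  ring_nf
  nlinarith [hna, hnb]

lemma eval_deriv_prod {ι : Type*} [DecidableEq ι] (s : Finset ι) (f : ι → ℂ) (x : ℂ) :
    (Polynomial.derivative (∏ i ∈ s, (X - C (f i)))).eval x
      = ∑ i ∈ s, ∏ j ∈ s.erase i, (x - f j) := by
  induction s using Finset.induction_on with
  | empty => simp
  | @insert a s ha ih =>
    rw [Finset.prod_insert ha, derivative_mul, derivative_sub, derivative_X, derivative_C,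
      sub_zero, one_mul, eval_add, eval_mul, eval_sub, eval_X, eval_C, ih,
      Finset.sum_insert ha, Finset.erase_insert ha, Finset.mul_sum, eval_prod]
    simp only [eval_sub, eval_X, eval_C]
    congr 1
    refine Finset.sum_congr rfl fun i hi => ?_
    rw [Finset.erase_insert_of_ne (by rintro rfl; exact ha hi),
      Finset.prod_insert (fun h => ha (Finset.mem_of_mem_erase h))]


/-- if `z₁,…,z_{n-1}, z₀` are `n` pairwise distinct points on the unit circle
and `p` is a polynomial with `deg p ≤ n−1`, `p(z_k) = 0` for `k = 1,…,n−1` and `p'(z₀) = 0`,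
then `p = 0`. -/
theorem vanishing_from_circle_roots (n : ℕ) (hn : 2 ≤ n)
    (z : Fin (n - 1) → ℂ) (z₀ : ℂ)
    (hz : ∀ j, ‖z j‖ = 1) (hz₀ : ‖z₀‖ = 1)
    (hinj : Function.Injective z) (hne : ∀ j, z₀ ≠ z j)
    (p : Polynomial ℂ) (hdeg : p.degree ≤ (n - 1 : ℕ))
    (hroots : ∀ j, p.eval (z j) = 0)
    (hder : (Polynomial.derivative p).eval z₀ = 0) :
    p = 0 := by
  classical
  by_contra hp0
  have hm1 : 1 ≤ n - 1 := by omega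
  set s : Multiset ℂ := Finset.univ.val.map z with hsdef
  have hs : s.Nodup := Multiset.Nodup.map hinj Finset.univ.nodup
  have hsub : s ⊆ p.roots := by
    intro a ha
    obtain ⟨j, _, rfl⟩ := Multiset.mem_map.1 ha
    exact (Polynomial.mem_roots hp0).2 (hroots j)
  have hle : s ≤ p.roots := (Multiset.le_iff_subset hs).2 hsub
  obtain ⟨r, hr⟩ := (Multiset.prod_X_sub_C_dvd_iff_le_roots hp0 s).2 hle
  set q : Polynomial ℂ := (s.map fun a => X - C a).prod with hqdef
  have hq : q = ∏ j : Fin (n - 1), (X - C (z j)) := by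
    rw [hqdef, hsdef, Multiset.map_map, Finset.prod_eq_multiset_prod]
    rfl
  have hqmonic : q.Monic := by
    rw [hq]; exact monic_prod_of_monic _ _ fun i _ => monic_X_sub_C _
  have hqdeg : q.natDegree = (n - 1) := by
    rw [hq, natDegree_prod _ _ fun i _ => X_sub_C_ne_zero (z i)]
    simp
  have hq0 : q ≠ 0 := hqmonic.ne_zero
  have hr0 : r ≠ 0 := by rintro rfl; exact hp0 (by simpa using hr)
  have hrdeg : r.natDegree = 0 := by
    have hpd : p.natDegree = q.natDegree + r.natDegree := natDegree_mul hq0 hr0 ▸ by rw [hr]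
    have h2 : p.natDegree ≤ n - 1 := natDegree_le_iff_degree_le.2 hdeg
    omega
  obtain ⟨c, rfl⟩ : ∃ c, C c = r := Polynomial.natDegree_eq_zero.1 hrdeg
  -- compute the derivative
  have hderq : (Polynomial.derivative q).eval z₀
      = ∑ i : Fin (n - 1), ∏ j ∈ Finset.univ.erase i, (z₀ - z j) := by
    rw [hq]; exact eval_deriv_prod _ _ _
  have hQ : q.eval z₀ = ∏ j : Fin (n - 1), (z₀ - z j) := by
    rw [hq, eval_prod]; simp
  have hQ0 : q.eval z₀ ≠ 0 := by
    rw [hQ]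
    exact Finset.prod_ne_zero_iff.2 fun j _ => sub_ne_zero.2 (hne j)
  have hterm : ∀ i : Fin (n - 1), ∏ j ∈ Finset.univ.erase i, (z₀ - z j)
      = q.eval z₀ * (z₀ - z i)⁻¹ := by
    intro i
    rw [hQ, ← Finset.mul_prod_erase _ _ (Finset.mem_univ i), mul_comm (z₀ - z i),
      mul_assoc, mul_inv_cancel₀ (sub_ne_zero.2 (hne i)), mul_one]
  have hsum : (Polynomial.derivative q).eval z₀
      = q.eval z₀ * ∑ i : Fin (n - 1), (z₀ - z i)⁻¹ := by
    rw [hderq, Finset.mul_sum]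
    exact Finset.sum_congr rfl fun i _ => hterm i
  have hS : (∑ i : Fin (n - 1), (z₀ - z i)⁻¹) ≠ 0 := by
    intro h0
    have : (∑ i : Fin (n - 1), z₀ / (z₀ - z i)) = 0 := by
      simp only [div_eq_mul_inv, ← Finset.mul_sum, h0, mul_zero]
    have hre : (∑ i : Fin (n - 1), z₀ / (z₀ - z i)).re = (n - 1 : ℕ) * (1/2 : ℝ) := by
      rw [Complex.re_sum]
      rw [Finset.sum_congr rfl fun i _ => re_half z₀ (z i) hz₀ (hz i) (hne i)]
      simp [mul_comm]
    rw [this] at hre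
    simp only [Complex.zero_re] at hre
    have : ((n - 1 : ℕ) : ℝ) ≥ 1 := by exact_mod_cast hm1
    nlinarith
  have hdq0 : (Polynomial.derivative q).eval z₀ ≠ 0 := by
    rw [hsum]; exact mul_ne_zero hQ0 hS
  have hc : c = 0 := by
    have : (Polynomial.derivative p).eval z₀ = (Polynomial.derivative q).eval z₀ * c := by
      rw [hr, derivative_mul, derivative_C, mul_zero, add_zero, eval_mul, eval_C]
    rw [hder] at this
    exact ((mul_eq_zero.1 this.symm).resolve_left hdq0)
  exact hp0 (by rw [hr, hc, map_zero, mul_zero])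

end CMVPaper
end
end
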